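/- arXiv:1009.4724 — 11 statements merged into one kernel-verified Lean document; each statement's English description precedes it below -/
import Mathlib

section
/- If a finite set M ⊆ ℚ^n is not saturated and contains both a vector v and its negative −v, then at least one of the sets M \ {v} and M \ {−v} is not saturated. -/
/-- `v` is a linear combination of the vectors in `M` with integer coefficients. -/
def memZSpan {n : ℕ} (M : Finset (Fin n → ℚ)) (v : Fin n → ℚ) : Prop :=
  ∃ c : (Fin n → ℚ) → ℤ, v = ∑ w ∈ M, (c w : ℚ) • w

/-- `v` is a linear combination of the vectors in `M` with nonnegative rational coefficients. -/
def memQnnSpan {n : ℕ} (M : Finset (Fin n → ℚ)) (v : Fin n → ℚ) : Prop :=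
  ∃ q : (Fin n → ℚ) → ℚ, (∀ w, 0 ≤ q w) ∧ v = ∑ w ∈ M, q w • w

/-- `v` is a linear combination of the vectors in `M` with nonnegative integer coefficients. -/
def memNSpan {n : ℕ} (M : Finset (Fin n → ℚ)) (v : Fin n → ℚ) : Prop :=
  ∃ a : (Fin n → ℚ) → ℕ, v = ∑ w ∈ M, (a w : ℚ) • w

/-- A finite set `M ⊆ ℚ^n` is saturated if `ℤ≥0(M) = ℤ(M) ∩ ℚ≥0(M)`. -/
def Saturated {n : ℕ} (M : Finset (Fin n → ℚ)) : Prop :=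
  ∀ v : Fin n → ℚ, memZSpan M v → memQnnSpan M v → memNSpan M v

private lemma split2 {α β : Type*} [AddCommMonoid β] [DecidableEq α] (s : Finset α) (a b : α)
    (ha : a ∈ s) (hb : b ∈ s) (hab : a ≠ b) (f : α → β) :
    ∑ x ∈ s, f x = f a + f b + ∑ x ∈ (s.erase a).erase b, f x := by
  rw [← Finset.add_sum_erase s f ha,
    ← Finset.add_sum_erase (s.erase a) f (Finset.mem_erase.mpr ⟨hab.symm, hb⟩), add_assoc]

private lemma extendN {n : ℕ} {M : Finset (Fin n → ℚ)} {x u : Fin n → ℚ} (hx : x ∈ M)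
    (h : memNSpan (M.erase x) u) : memNSpan M u := by
  obtain ⟨a, ha⟩ := h
  refine ⟨fun w => if w = x then 0 else a w, ?_⟩
  rw [ha, ← Finset.add_sum_erase M _ hx]
  simp only [eq_self_iff_true, if_true, Nat.cast_zero, zero_smul, zero_add]
  exact Finset.sum_congr rfl fun w hw => by rw [if_neg (Finset.ne_of_mem_erase hw)]

/-- If a finite set `M ⊆ ℚ^n` is not saturated and contains both a vector `v` and its
negative `-v`, then at least one of `M \ {v}` and `M \ {-v}` is not saturated. -/
theorem stmt1 {n : ℕ} (M : Finset (Fin n → ℚ)) (v : Fin n → ℚ)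
    (hv : v ∈ M) (hvneg : -v ∈ M) (h : ¬ Saturated M) :
    ¬ Saturated (M.erase v) ∨ ¬ Saturated (M.erase (-v)) := by
  by_contra hc
  push_neg at hc
  obtain ⟨h1, h2⟩ := hc
  apply h
  intro u hZ hQ
  obtain ⟨c, hcu⟩ := hZ
  obtain ⟨q, hq0, hqu⟩ := hQ
  by_cases hv0 : v = 0
  · -- v = 0 : erasing 0 does not change any span
    subst hv0
    have hZ' : memZSpan (M.erase 0) u :=
      ⟨c, by rw [hcu, ← Finset.add_sum_erase M _ hv]; simp⟩
    have hQ' : memQnnSpan (M.erase 0) u :=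
      ⟨q, hq0, by rw [hqu, ← Finset.add_sum_erase M _ hv]; simp⟩
    exact extendN hv (h1 u hZ' hQ')
  · have hne : v ≠ -v := by
      intro e
      apply hv0
      funext i
      have := congrFun e i
      simp only [Pi.neg_apply] at this
      simp only [Pi.zero_apply]
      linarith
    have hvM1 : -v ∈ M.erase v := Finset.mem_erase.mpr ⟨hne.symm, hvneg⟩
    have hvM2 : v ∈ M.erase (-v) := Finset.mem_erase.mpr ⟨hne, hv⟩
    by_cases hqv : q (-v) ≤ q v
    · -- use M.erase (-v)
      have hZ2 : memZSpan (M.erase (-v)) u := by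
        refine ⟨fun w => if w = v then c v - c (-v) else c w, ?_⟩
        have hcong : ∑ w ∈ ((M.erase (-v)).erase v),
            (((if w = v then c v - c (-v) else c w : ℤ)) : ℚ) • w
            = ∑ w ∈ ((M.erase (-v)).erase v), (c w : ℚ) • w :=
          Finset.sum_congr rfl fun w hw => by rw [if_neg (Finset.ne_of_mem_erase hw)]
        rw [hcu, split2 M (-v) v hvneg hv hne.symm,
          ← Finset.add_sum_erase (M.erase (-v)) _ hvM2, hcong]
        beta_reduce
        rw [if_pos rfl]
        push_cast
        module
      have hQ2 : memQnnSpan (M.erase (-v)) u := by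
        refine ⟨fun w => if w = v then q v - q (-v) else q w, fun w => ?_, ?_⟩
        · by_cases hw : w = v
          · simp [hw, sub_nonneg.mpr hqv]
          · simp [hw, hq0 w]
        · have hcong : ∑ w ∈ ((M.erase (-v)).erase v),
              (if w = v then q v - q (-v) else q w) • w
              = ∑ w ∈ ((M.erase (-v)).erase v), q w • w :=
            Finset.sum_congr rfl fun w hw => by rw [if_neg (Finset.ne_of_mem_erase hw)]
          rw [hqu, split2 M (-v) v hvneg hv hne.symm,
            ← Finset.add_sum_erase (M.erase (-v)) _ hvM2, hcong]
          beta_reduce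
          rw [if_pos rfl]
          module
      exact extendN hvneg (h2 u hZ2 hQ2)
    · -- use M.erase v
      have hZ1 : memZSpan (M.erase v) u := by
        refine ⟨fun w => if w = -v then c (-v) - c v else c w, ?_⟩
        have hcong : ∑ w ∈ ((M.erase v).erase (-v)),
            (((if w = -v then c (-v) - c v else c w : ℤ)) : ℚ) • w
            = ∑ w ∈ ((M.erase v).erase (-v)), (c w : ℚ) • w :=
          Finset.sum_congr rfl fun w hw => by rw [if_neg (Finset.ne_of_mem_erase hw)]
        rw [hcu, split2 M v (-v) hv hvneg hne,
          ← Finset.add_sum_erase (M.erase v) _ hvM1, hcong]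
        beta_reduce
        rw [if_pos rfl]
        push_cast
        module
      have hQ1 : memQnnSpan (M.erase v) u := by
        push_neg at hqv
        refine ⟨fun w => if w = -v then q (-v) - q v else q w, fun w => ?_, ?_⟩
        · by_cases hw : w = -v
          · simp [hw, sub_nonneg.mpr hqv.le]
          · simp [hw, hq0 w]
        · have hcong : ∑ w ∈ ((M.erase v).erase (-v)),
              (if w = -v then q (-v) - q v else q w) • w
              = ∑ w ∈ ((M.erase v).erase (-v)), q w • w :=
            Finset.sum_congr rfl fun w hw => by rw [if_neg (Finset.ne_of_mem_erase hw)]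
          rw [hqu, split2 M v (-v) hv hvneg hne,
            ← Finset.add_sum_erase (M.erase v) _ hvM1, hcong]
          beta_reduce
          rw [if_pos rfl]
          module
      exact extendN hv (h1 u hZ1 hQ1)
end

section
/- If a finite set M = {v1,…,vr} ⊆ ℚ^n is not saturated, then there exists a vector v0 ∈ (ℤ(v1,…,vr) ∩ ℚ≥0(v1,…,vr)) \ ℤ≥0(v1,…,vr) which can be written as v0 = q1·v_{i1} + … + qs·v_{is} for some linearly independent vectors v_{i1},…,v_{is} ∈ M and rational coefficients q_j with 0 ≤ q_j < 1 for each j. -/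
lemma carath {n : ℕ} (M : Finset (Fin n → ℚ)) :
    ∀ v : Fin n → ℚ,
      (∃ q : (Fin n → ℚ) → ℚ, (∀ w, 0 ≤ q w) ∧ v = ∑ w ∈ M, q w • w) →
      ∃ S : Finset (Fin n → ℚ), S ⊆ M ∧
        LinearIndependent ℚ (fun w : S => (w : Fin n → ℚ)) ∧
        ∃ q : (Fin n → ℚ) → ℚ, (∀ w, 0 ≤ q w) ∧ v = ∑ w ∈ S, q w • w := by
  induction M using Finset.strongInduction with
  | _ M ih =>
    intro v ⟨q, hq0, hqv⟩
    by_cases hLI : LinearIndependent ℚ (fun w : M => (w : Fin n → ℚ))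
    · exact ⟨M, le_refl _, hLI, q, hq0, hqv⟩
    · rw [Fintype.not_linearIndependent_iff] at hLI
      obtain ⟨g, hgsum, i0, hi0⟩ := hLI
      -- WLOG some coefficient positive
      obtain ⟨g, hgsum, i0, hi0⟩ :
          ∃ g : M → ℚ, ∑ i, g i • (i : Fin n → ℚ) = 0 ∧ ∃ i, 0 < g i := by
        rcases lt_or_gt_of_ne hi0 with hneg | hpos
        · refine ⟨-g, ?_, i0, by simpa using hneg⟩
          simpa using hgsum
        · exact ⟨g, hgsum, i0, hpos⟩
      set c : (Fin n → ℚ) → ℚ := fun w => if h : w ∈ M then g ⟨w, h⟩ else 0 with hc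
      have hcsum : ∑ w ∈ M, c w • w = 0 := by
        rw [← Finset.sum_attach M (fun w => c w • w)]
        simpa [hc] using hgsum
      have hcpos : ∃ w ∈ M, 0 < c w := ⟨i0, i0.2, by simpa [hc] using hi0⟩
      set T := M.filter (fun w => 0 < c w) with hT
      have hTne : T.Nonempty := by
        obtain ⟨w, hw, hwc⟩ := hcpos
        exact ⟨w, Finset.mem_filter.2 ⟨hw, hwc⟩⟩
      obtain ⟨w0, hw0T, hw0min⟩ := Finset.exists_min_image T (fun w => q w / c w) hTne
      have hw0M : w0 ∈ M := (Finset.mem_filter.1 hw0T).1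
      have hw0c : 0 < c w0 := (Finset.mem_filter.1 hw0T).2
      set t := q w0 / c w0 with ht
      have ht0 : 0 ≤ t := div_nonneg (hq0 w0) hw0c.le
      set q' : (Fin n → ℚ) → ℚ := fun w => q w - t * c w with hq'
      have hq'nn : ∀ w ∈ M, 0 ≤ q' w := by
        intro w hw
        by_cases hcw : 0 < c w
        · have := hw0min w (Finset.mem_filter.2 ⟨hw, hcw⟩)
          have : t * c w ≤ q w := by
            rw [ht] at this ⊢
            calc q w0 / c w0 * c w ≤ q w / c w * c w := by
                  exact mul_le_mul_of_nonneg_right this hcw.le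
              _ = q w := div_mul_cancel₀ _ hcw.ne'
          simpa [hq'] using sub_nonneg.2 this
        · push_neg at hcw
          have : t * c w ≤ 0 := mul_nonpos_of_nonneg_of_nonpos ht0 hcw
          simp only [hq']
          linarith [hq0 w]
      have hq'0 : q' w0 = 0 := by
        simp [hq', ht, div_mul_cancel₀ _ hw0c.ne']
      have hsum' : v = ∑ w ∈ M, q' w • w := by
        simp only [hq', sub_smul, Finset.sum_sub_distrib, mul_smul]
        rw [← Finset.smul_sum, hcsum, smul_zero, sub_zero, hqv]
      have hsum'' : v = ∑ w ∈ M.erase w0, q' w • w := by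
        rw [hsum', ← Finset.add_sum_erase M _ hw0M, hq'0, zero_smul, zero_add]
      have hsub : M.erase w0 ⊂ M := Finset.erase_ssubset hw0M
      obtain ⟨S, hSsub, hSLI, r, hr0, hrv⟩ := ih (M.erase w0) hsub v
        ⟨fun w => if w ∈ M.erase w0 then q' w else 0, by
          intro w
          by_cases hw : w ∈ M.erase w0
          · simpa [hw] using hq'nn w (Finset.mem_of_mem_erase hw)
          · simp [hw], by
          rw [hsum'']
          exact Finset.sum_congr rfl (fun w hw => by simp [hw])⟩
      exact ⟨S, hSsub.trans (Finset.erase_subset _ _), hSLI, r, hr0, hrv⟩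

/-- If a finite set `M = {v1,…,vr} ⊆ ℚ^n` is not saturated, then there exists a vector
`v0 ∈ (ℤ(M) ∩ ℚ≥0(M)) \ ℤ≥0(M)` which is a linear combination, with rational
coefficients in `[0,1)`, of some linearly independent subset of `M`. -/
theorem stmt2 {n : ℕ} (M : Finset (Fin n → ℚ)) (h : ¬ Saturated M) :
    ∃ v0 : Fin n → ℚ, memZSpan M v0 ∧ memQnnSpan M v0 ∧ ¬ memNSpan M v0 ∧
      ∃ S : Finset (Fin n → ℚ), S ⊆ M ∧
        LinearIndependent ℚ (fun w : S => (w : Fin n → ℚ)) ∧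
        ∃ q : (Fin n → ℚ) → ℚ, (∀ w ∈ S, 0 ≤ q w ∧ q w < 1) ∧
          v0 = ∑ w ∈ S, q w • w := by
  simp only [Saturated, not_forall] at h
  obtain ⟨v, hZ, hQ, hN⟩ := h
  obtain ⟨S, hSM, hSLI, q, hq0, hqv⟩ := carath M v hQ
  set v0 : Fin n → ℚ := ∑ w ∈ S, Int.fract (q w) • w with hv0
  have hsplit : v = v0 + ∑ w ∈ S, (⌊q w⌋ : ℚ) • w := by
    rw [hv0, ← Finset.sum_add_distrib, hqv]
    refine Finset.sum_congr rfl fun w _ => ?_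
    rw [← add_smul, Int.fract_add_floor]
  have hSM' : ∑ w ∈ S, (⌊q w⌋ : ℚ) • w
      = ∑ w ∈ M, (if w ∈ S then (⌊q w⌋ : ℚ) else 0) • w := by
    rw [← Finset.sum_subset hSM (fun w _ hw => by simp [hw])]
    exact Finset.sum_congr rfl fun w hw => by simp [hw]
  refine ⟨v0, ?_, ?_, ?_, S, hSM, hSLI,
    fun w => Int.fract (q w), fun w _ => ⟨Int.fract_nonneg _, Int.fract_lt_one _⟩, rfl⟩
  · -- memZSpan
    obtain ⟨c, hc⟩ := hZ
    refine ⟨fun w => c w - (if w ∈ S then ⌊q w⌋ else 0), ?_⟩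
    have h1 : v0 = v - ∑ w ∈ S, (⌊q w⌋ : ℚ) • w := by rw [hsplit]; abel
    rw [h1, hc, hSM', ← Finset.sum_sub_distrib]
    refine Finset.sum_congr rfl fun w _ => ?_
    rw [← sub_smul]
    by_cases hw : w ∈ S <;> simp [hw]
  · -- memQnnSpan
    refine ⟨fun w => if w ∈ S then Int.fract (q w) else 0, fun w => ?_, ?_⟩
    · by_cases hw : w ∈ S <;> simp [hw, Int.fract_nonneg]
    · rw [hv0, ← Finset.sum_subset hSM (fun w _ hw => by simp [hw])]
      exact Finset.sum_congr rfl fun w hw => by simp [hw]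
  · -- ¬ memNSpan
    intro ⟨a, ha⟩
    refine hN ⟨fun w => a w + (if w ∈ S then (⌊q w⌋).toNat else 0), ?_⟩
    have hfl : ∀ w ∈ S, (((⌊q w⌋).toNat : ℤ) : ℚ) = (⌊q w⌋ : ℚ) := by
      intro w hw
      have h0 : (0:ℤ) ≤ ⌊q w⌋ := Int.floor_nonneg.2 (hq0 w)
      exact_mod_cast congrArg (fun z : ℤ => (z : ℚ)) (Int.toNat_of_nonneg h0)
    have hSM'' : ∑ w ∈ S, (⌊q w⌋ : ℚ) • w
        = ∑ w ∈ M, (if w ∈ S then ((⌊q w⌋).toNat : ℚ) else 0) • w := by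
      rw [← Finset.sum_subset hSM (fun w _ hw => by simp [hw])]
      refine Finset.sum_congr rfl fun w hw => ?_
      have := hfl w hw
      push_cast at this
      simp [hw, this]
    rw [hsplit, ha, hSM'', ← Finset.sum_add_distrib]
    refine Finset.sum_congr rfl fun w _ => ?_
    rw [← add_smul]
    by_cases hw : w ∈ S <;> push_cast <;> simp [hw]
end

section
/- Every unimodular finite set of vectors in ℚ^n is hereditarily normal, i.e., every subset of a unimodular set is saturated. -/
/-- The determinant of a `d`-tuple of vectors from `M`, computed with respect to a fixed
basis `b` of the linear span of `M`. -/
noncomputable def detT {n d : ℕ} (M : Finset (Fin n → ℚ))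
    (b : Module.Basis (Fin d) ℚ (Submodule.span ℚ (M : Set (Fin n → ℚ))))
    (w : Fin d → M) : ℚ :=
  Matrix.det (Matrix.of fun i j =>
    b.repr ⟨(w i : Fin n → ℚ), Submodule.subset_span (Finset.mem_coe.mpr (w i).2)⟩ j)

lemma carat {n : ℕ} (S : Finset (Fin n → ℚ)) (v : Fin n → ℚ)
    (h : ∃ q : (Fin n → ℚ) → ℚ, (∀ w, 0 ≤ q w) ∧ v = ∑ w ∈ S, q w • w) :
    ∃ T : Finset (Fin n → ℚ), T ⊆ S ∧
      LinearIndependent ℚ ((↑) : ↥(T : Set (Fin n → ℚ)) → (Fin n → ℚ)) ∧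
      ∃ q : (Fin n → ℚ) → ℚ, (∀ w, 0 ≤ q w) ∧ v = ∑ t ∈ T, q t • t := by
  obtain ⟨q, hq, hv⟩ := h
  -- strong induction on the cardinality of the representing set
  suffices H : ∀ k : ℕ, ∀ T : Finset (Fin n → ℚ), T.card = k → T ⊆ S →
      ∀ q : (Fin n → ℚ) → ℚ, (∀ w, 0 ≤ q w) → v = ∑ t ∈ T, q t • t →
      ∃ T' : Finset (Fin n → ℚ), T' ⊆ S ∧
        LinearIndependent ℚ ((↑) : ↥(T' : Set (Fin n → ℚ)) → (Fin n → ℚ)) ∧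
        ∃ q' : (Fin n → ℚ) → ℚ, (∀ w, 0 ≤ q' w) ∧ v = ∑ t ∈ T', q' t • t by
    exact H S.card S rfl (subset_refl S) q hq hv
  intro k
  induction k using Nat.strong_induction_on with
  | _ k IH =>
    intro T hcard hTS q hq hv
    by_cases hind : LinearIndependent ℚ ((↑) : ↥(T : Set (Fin n → ℚ)) → (Fin n → ℚ))
    · exact ⟨T, hTS, hind, q, hq, hv⟩
    -- get a nontrivial relation supported on T
    obtain ⟨g, hg0, i, hgi⟩ := Fintype.not_linearIndependent_iff.mp hind
    set r : (Fin n → ℚ) → ℚ := fun x => if h : x ∈ T then g ⟨x, h⟩ else 0 with hr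
    have hrsum : ∑ t ∈ T, r t • t = 0 := by
      rw [← hg0, ← Finset.sum_attach T (fun t => r t • t)]
      refine Finset.sum_congr rfl fun t _ => ?_
      simp [hr, t.2]
    have hrsupp : ∀ x, x ∉ T → r x = 0 := fun x hx => by simp [hr, hx]
    have hrne : r (i : Fin n → ℚ) ≠ 0 := by simpa [hr, i.2] using hgi
    have hiT : (i : Fin n → ℚ) ∈ T := i.2
    -- a step lemma: given a relation with some positive coefficient, shrink T
    have step : ∀ r : (Fin n → ℚ) → ℚ, (∑ t ∈ T, r t • t = 0) → (∀ x, x ∉ T → r x = 0) →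
        (∃ t ∈ T, 0 < r t) →
        ∃ T' : Finset (Fin n → ℚ), T' ⊆ S ∧
          LinearIndependent ℚ ((↑) : ↥(T' : Set (Fin n → ℚ)) → (Fin n → ℚ)) ∧
          ∃ q' : (Fin n → ℚ) → ℚ, (∀ w, 0 ≤ q' w) ∧ v = ∑ t ∈ T', q' t • t := by
      intro r hrsum hrsupp ⟨tp, htpT, htp⟩
      have hPne : (T.filter (fun t => 0 < r t)).Nonempty := ⟨tp, Finset.mem_filter.mpr ⟨htpT, htp⟩⟩
      obtain ⟨t0, ht0P, ht0min⟩ := Finset.exists_min_image _ (fun t => q t / r t) hPne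
      obtain ⟨ht0T, ht0pos⟩ := Finset.mem_filter.mp ht0P
      set μ := q t0 / r t0 with hμ
      have hμ0 : 0 ≤ μ := div_nonneg (hq t0) ht0pos.le
      set q' : (Fin n → ℚ) → ℚ := fun w => q w - μ * r w with hq'
      have hq'nonneg : ∀ w, 0 ≤ q' w := by
        intro w
        by_cases hw : w ∈ T
        · by_cases hrw : 0 < r w
          · have := ht0min w (Finset.mem_filter.mpr ⟨hw, hrw⟩)
            have : μ * r w ≤ q w := by
              rw [div_le_div_iff₀ ht0pos hrw] at this
              calc μ * r w = q t0 / r t0 * r w := rfl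
                _ ≤ q w := by
                  rw [div_mul_eq_mul_div, div_le_iff₀ ht0pos] at *
                  nlinarith [this]
            simp [hq']; linarith
          · have : μ * r w ≤ 0 := mul_nonpos_of_nonneg_of_nonpos hμ0 (not_lt.mp hrw)
            have := hq w
            simp [hq']; linarith
        · have := hq w
          simp [hq', hrsupp w hw]; linarith
      have hq't0 : q' t0 = 0 := by
        simp [hq', hμ, div_mul_cancel₀ _ (ne_of_gt ht0pos)]
      have hsum' : v = ∑ t ∈ T, q' t • t := by
        have : ∑ t ∈ T, q' t • t = (∑ t ∈ T, q t • t) - μ • (∑ t ∈ T, r t • t) := by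
          rw [Finset.smul_sum, ← Finset.sum_sub_distrib]
          refine Finset.sum_congr rfl fun t _ => ?_
          simp [hq', sub_smul, smul_smul]
        rw [this, hrsum, smul_zero, sub_zero, hv]
      have hsum'' : v = ∑ t ∈ T.erase t0, q' t • t := by
        rw [hsum', ← Finset.add_sum_erase T _ ht0T, hq't0, zero_smul, zero_add]
      exact IH (T.erase t0).card (hcard ▸ Finset.card_erase_lt_of_mem ht0T) _ rfl
        ((Finset.erase_subset t0 T).trans hTS) q' hq'nonneg hsum''
    rcases lt_trichotomy (r (i : Fin n → ℚ)) 0 with hneg | hzero | hpos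
    · refine step (fun x => - r x) ?_ (fun x hx => by simp [hrsupp x hx]) ⟨i, hiT, by simpa using hneg⟩
      simp only [neg_smul, Finset.sum_neg_distrib, hrsum, neg_zero]
    · exact absurd hzero hrne
    · exact step r hrsum hrsupp ⟨i, hiT, hpos⟩


lemma key {d : ℕ} {V : Type*} [AddCommGroup V] [Module ℚ V] (b : Module.Basis (Fin d) ℚ V)
    (N : Finset V) (c : ℚ)
    (huni : ∀ w : Fin d → {x // x ∈ N},
      b.det (fun i => (w i : V)) = 0 ∨ |b.det (fun i => (w i : V))| = c)
    (hspan : Submodule.span ℚ (N : Set V) = ⊤)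
    (T : Finset V) (hTN : T ⊆ N)
    (hT : LinearIndependent ℚ ((↑) : ↥(T : Set V) → V))
    (x : V) (cz : V → ℤ) (hx : x = ∑ u ∈ N, (cz u : ℚ) • u)
    (q : V → ℚ) (hqx : x = ∑ t ∈ T, q t • t) :
    ∀ t ∈ T, ∃ z : ℤ, (z : ℚ) = q t := by
  classical
  -- extend T to a basis of V inside N
  obtain ⟨B, hBN, hTB, hNspanB, hBli⟩ :=
    exists_linearIndepOn_id_extension hT (Finset.coe_subset.mpr hTN)
  have hBfin : B.Finite := N.finite_toSet.subset hBN
  haveI : Fintype B := hBfin.fintype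
  have hBtop : Submodule.span ℚ B = ⊤ :=
    top_unique (hspan ▸ Submodule.span_le.mpr hNspanB)
  let bB0 : Module.Basis B ℚ V := Module.Basis.mk (v := ((↑) : B → V)) hBli (by rw [Subtype.range_coe]; exact hBtop.ge)
  have hcardB : Fintype.card B = d := by
    have h1 := Module.finrank_eq_card_basis b
    have h2 := Module.finrank_eq_card_basis bB0
    rw [h1] at h2
    simpa using h2.symm
  let e : B ≃ Fin d := Fintype.equivFinOfCardEq hcardB
  let bB : Module.Basis (Fin d) ℚ V := bB0.reindex e
  have hbB : ∀ i, bB i = ((e.symm i : B) : V) := by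
    intro i; simp [bB, Module.Basis.reindex_apply, bB0, Module.Basis.mk_apply]; exact Module.Basis.mk_apply (v := ((↑) : B → V)) hBli _ _
  have hbBmem : ∀ i, bB i ∈ N := fun i => by rw [hbB]; exact hBN (e.symm i).2
  set D := b.det ⇑bB with hD
  have hDne : D ≠ 0 := by
    have := b.isUnit_det bB
    exact this.ne_zero
  have hDc : |D| = c := by
    rcases huni (fun i => ⟨bB i, hbBmem i⟩) with h | h
    · exact absurd h hDne
    · exact h
  -- every element of N has integer coordinates w.r.t. bB
  have hint : ∀ m ∈ N, ∀ k : Fin d, ∃ z : ℤ, (z : ℚ) = bB.equivFun m k := by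
    intro m hm k
    have hdet : b.det (Function.update (⇑bB) k m) = bB.equivFun m k * D := by
      conv_lhs => rw [show m = ∑ j, bB.equivFun m j • bB j from (bB.sum_equivFun m).symm]
      rw [(b.det).map_update_sum Finset.univ k (fun j => bB.equivFun m j • bB j)]
      rw [Finset.sum_eq_single k]
      · rw [(b.det).map_update_smul, Function.update_eq_self, smul_eq_mul]
      · intro j _ hjk
        rw [(b.det).map_update_smul]
        have : b.det (Function.update (⇑bB) k (bB j)) = 0 := by
          refine (b.det).map_eq_zero_of_eq _ (?_ : _ = _) hjk
          · rw [Function.update_of_ne hjk, Function.update_self]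
        rw [this, smul_zero]
      · simp
    have := huni (Function.update (fun i => (⟨bB i, hbBmem i⟩ : {x // x ∈ N})) k ⟨m, hm⟩)
    have heq : (fun i => ((Function.update (fun i => (⟨bB i, hbBmem i⟩ : {x // x ∈ N})) k ⟨m, hm⟩ i : {x // x ∈ N}) : V)) = Function.update (⇑bB) k m := by
      funext j
      exact Function.apply_update (fun _ (x : {x // x ∈ N}) => (x : V)) _ k ⟨m, hm⟩ j
    rw [heq, hdet] at this
    rcases this with h | h
    · refine ⟨0, ?_⟩
      rcases mul_eq_zero.mp h with h | h
      · simp [h]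
      · exact absurd h hDne
    · have habs : |bB.equivFun m k| = 1 := by
        rw [abs_mul, ← hDc] at h
        exact mul_right_cancel₀ (fun h0 => hDne (abs_eq_zero.mp h0))
          (h.trans (one_mul |D|).symm)
      rcases (abs_eq (by norm_num : (0:ℚ) ≤ 1)).mp habs with h1 | h1
      · exact ⟨1, by rw [h1]; norm_num⟩
      · exact ⟨-1, by rw [h1]; norm_num⟩
  -- hence x has integer coordinates w.r.t. bB
  have hxint : ∀ k : Fin d, ∃ z : ℤ, (z : ℚ) = bB.equivFun x k := by
    intro k
    have hlin : bB.equivFun x k = ∑ u ∈ N, (cz u : ℚ) * bB.equivFun u k := by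
      rw [hx, map_sum]
      rw [Finset.sum_apply]
      refine Finset.sum_congr rfl fun u _ => ?_
      rw [map_smul]; rfl
    choose zf hzf using fun (u : V) (hu : u ∈ N) => hint u hu k
    refine ⟨∑ u ∈ N.attach, cz u * zf u u.2, ?_⟩
    rw [hlin, ← Finset.sum_attach N (fun u => (cz u : ℚ) * bB.equivFun u k)]
    push_cast
    exact Finset.sum_congr rfl fun u _ => by rw [hzf u u.2]
  -- T-coordinates of x are picked out by the basis
  intro t ht
  have htB : t ∈ B := hTB ht
  set i0 : Fin d := e ⟨t, htB⟩ with hi0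
  have hbBi0 : bB i0 = t := by rw [hbB]; simp [i0]
  -- the coefficient function supported on T
  set g : Fin d → ℚ := fun j => if bB j ∈ T then q (bB j) else 0 with hg
  have hxg : x = ∑ j, g j • bB j := by
    have h1 : ∑ j, g j • bB j = ∑ j ∈ Finset.univ.filter (fun j => bB j ∈ T), q (bB j) • bB j := by
      rw [Finset.sum_filter]
      refine Finset.sum_congr rfl fun j _ => ?_
      by_cases hj : bB j ∈ T <;> simp [hg, hj]
    have h2 : ∑ j ∈ Finset.univ.filter (fun j => bB j ∈ T), q (bB j) • bB j
        = ∑ t' ∈ T, q t' • t' := by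
      refine Finset.sum_nbij (fun j => bB j) ?_ ?_ ?_ ?_
      · intro j hj; exact (Finset.mem_filter.mp hj).2
      · intro j1 hj1 j2 hj2 hjj; exact bB.injective hjj
      · intro t' ht'
        have ht'B : t' ∈ B := hTB ht'
        refine ⟨e ⟨t', ht'B⟩, Finset.mem_coe.mpr ?_, ?_⟩
        · refine Finset.mem_filter.mpr ⟨Finset.mem_univ _, ?_⟩
          rw [hbB]; simpa using ht'
        · simp [hbB]
      · intro j hj; rfl
    rw [h1, h2, hqx]
  have hcoord : bB.equivFun x i0 = q t := by
    rw [hxg, map_sum, Finset.sum_apply]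
    have : ∀ j, (bB.equivFun (g j • bB j)) i0 = g j * (if j = i0 then 1 else 0) := by
      intro j
      rw [map_smul]
      have : bB.equivFun (bB j) i0 = if j = i0 then 1 else 0 := bB.equivFun_self j i0
      rw [Pi.smul_apply, this, smul_eq_mul]
    simp_rw [this, mul_ite, mul_one, mul_zero]
    rw [Finset.sum_ite_eq' Finset.univ i0 g]
    simp [hg, hbBi0, ht]
  obtain ⟨z, hz⟩ := hxint i0
  exact ⟨z, by rw [hz, hcoord]⟩

lemma huni_transfer {n d : ℕ} (M : Finset (Fin n → ℚ))
    (b : Module.Basis (Fin d) ℚ (Submodule.span ℚ (M : Set (Fin n → ℚ))))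
    (c : ℚ)
    (huni : ∀ w : Fin d → M, detT M b w = 0 ∨ |detT M b w| = c)
    (N : Finset (Submodule.span ℚ (M : Set (Fin n → ℚ))))
    (hNmem : ∀ x, x ∈ N ↔ (x : Fin n → ℚ) ∈ M) :
    ∀ w : Fin d → {x // x ∈ N},
      b.det (fun i => (w i : Submodule.span ℚ (M : Set (Fin n → ℚ)))) = 0 ∨
      |b.det (fun i => (w i : Submodule.span ℚ (M : Set (Fin n → ℚ))))| = c := by
  intro w
  have hdet : b.det (fun i => (w i : Submodule.span ℚ (M : Set (Fin n → ℚ)))) =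
      detT M b (fun i => ⟨((w i : Submodule.span ℚ (M : Set (Fin n → ℚ))) : Fin n → ℚ),
        (hNmem _).mp (w i).2⟩) := by
    rw [Module.Basis.det_apply, detT, ← Matrix.det_transpose]
    congr 1
  rw [hdet]
  exact huni _

/-- Every unimodular finite set of vectors in `ℚ^n` is hereditarily normal: if all nonzero
determinants of `d`-tuples of vectors of `M` (computed in a fixed basis of the linear span
of `M`, whose dimension is `d`) have the same absolute value, then every subset of `M`
is saturated. -/
theorem stmt3 {n d : ℕ} (M : Finset (Fin n → ℚ))
    (b : Module.Basis (Fin d) ℚ (Submodule.span ℚ (M : Set (Fin n → ℚ))))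
    (c : ℚ)
    (huni : ∀ w : Fin d → M, detT M b w = 0 ∨ |detT M b w| = c) :
    ∀ S ⊆ M, Saturated S := by
  classical
  intro S hSM v hZ hQ
  let V := Submodule.span ℚ (M : Set (Fin n → ℚ))
  have hmemV : ∀ w ∈ M, w ∈ V := fun w hw => Submodule.subset_span (Finset.mem_coe.mpr hw)
  set N : Finset V := M.attach.image (fun w => (⟨w.1, hmemV w.1 w.2⟩ : V)) with hN
  have hNmem : ∀ x : V, x ∈ N ↔ (x : Fin n → ℚ) ∈ M := by
    intro x
    constructor
    · intro hx
      obtain ⟨w, _, rfl⟩ := Finset.mem_image.mp hx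
      exact w.2
    · intro hx
      exact Finset.mem_image.mpr ⟨⟨x.1, hx⟩, Finset.mem_attach _ _, Subtype.ext rfl⟩
  have hspanN : Submodule.span ℚ (N : Set V) = ⊤ := by
    apply Submodule.map_injective_of_injective (Submodule.injective_subtype V)
    rw [Submodule.map_span, Submodule.map_subtype_top]
    have himg : V.subtype '' (N : Set V) = (M : Set (Fin n → ℚ)) := by
      ext y
      simp only [Set.mem_image]
      constructor
      · rintro ⟨x, hx, rfl⟩
        exact Finset.mem_coe.mpr ((hNmem x).mp hx)
      · intro hy
        exact ⟨⟨y, Submodule.subset_span hy⟩,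
          Finset.mem_coe.mpr ((hNmem _).mpr (Finset.mem_coe.mp hy)), rfl⟩
    rw [himg]
  have huniV := huni_transfer M b c huni N hNmem
  obtain ⟨T, hTS, hTli, q, hq, hvT⟩ := carat S v hQ
  obtain ⟨cz, hcz⟩ := hZ
  have hvV : v ∈ V := by
    rw [hcz]
    exact Submodule.sum_mem _ (fun w hw => Submodule.smul_mem _ _ (hmemV w (hSM hw)))
  set x : V := ⟨v, hvV⟩ with hxdef
  have hTM : ∀ t ∈ T, t ∈ M := fun t ht => hSM (hTS ht)
  set Th : Finset V := T.attach.image (fun t => (⟨t.1, hmemV t.1 (hTM t.1 t.2)⟩ : V)) with hTh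
  have hThmem : ∀ y : V, y ∈ Th ↔ (y : Fin n → ℚ) ∈ T := by
    intro y; constructor
    · intro hy; obtain ⟨t, _, rfl⟩ := Finset.mem_image.mp hy; exact t.2
    · intro hy; exact Finset.mem_image.mpr ⟨⟨y.1, hy⟩, Finset.mem_attach _ _, Subtype.ext rfl⟩
  have hThN : Th ⊆ N := fun y hy => (hNmem y).mpr (hTM _ ((hThmem y).mp hy))
  have hThli : LinearIndependent ℚ ((↑) : ↥(Th : Set V) → V) := by
    apply LinearIndependent.of_comp V.subtype
    have hcomp : (V.subtype ∘ ((↑) : ↥(Th : Set V) → V)) =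
        ((↑) : ↥(T : Set (Fin n → ℚ)) → (Fin n → ℚ)) ∘
          (fun y : ↥(Th : Set V) =>
            (⟨((y : V) : Fin n → ℚ), (hThmem y.1).mp (Finset.mem_coe.mp y.2)⟩ :
              ↥(T : Set (Fin n → ℚ)))) := rfl
    rw [hcomp]
    refine hTli.comp _ (fun y1 y2 hy => ?_)
    have : ((y1 : V) : Fin n → ℚ) = ((y2 : V) : Fin n → ℚ) := by
      simpa using hy
    exact Subtype.ext (Subtype.ext this)
  set czV : V → ℤ := fun u => if (u : Fin n → ℚ) ∈ S then cz u else 0 with hczV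
  have hinjlift : ∀ x ∈ M.attach, ∀ y ∈ M.attach,
      (⟨x.1, hmemV x.1 x.2⟩ : V) = ⟨y.1, hmemV y.1 y.2⟩ → x = y := by
    intro x hx y hy h
    have : (x : Fin n → ℚ) = (y : Fin n → ℚ) := by simpa using h
    exact Subtype.ext this
  have hxNval : ((∑ u ∈ N, (czV u : ℚ) • u : V) : Fin n → ℚ) = v := by
    rw [show ((∑ u ∈ N, (czV u : ℚ) • u : V) : Fin n → ℚ)
        = ∑ u ∈ N, (czV u : ℚ) • (u : Fin n → ℚ) by
      rw [AddSubmonoidClass.coe_finset_sum]; rfl]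
    rw [hN, Finset.sum_image hinjlift]
    rw [Finset.sum_attach M (fun w => ((if w ∈ S then cz w else 0 : ℤ) : ℚ) • w)]
    rw [← Finset.sum_subset hSM (fun w _ hwS => by rw [if_neg hwS]; norm_num)]
    rw [hcz]
    exact (Finset.sum_congr rfl fun w hw => by rw [if_pos hw]).symm
  have hxN : x = ∑ u ∈ N, (czV u : ℚ) • u := Subtype.ext hxNval.symm
  set qV : V → ℚ := fun u => q (u : Fin n → ℚ) with hqV
  have hinjliftT : ∀ x ∈ T.attach, ∀ y ∈ T.attach,
      (⟨x.1, hmemV x.1 (hTM x.1 x.2)⟩ : V) = ⟨y.1, hmemV y.1 (hTM y.1 y.2)⟩ → x = y := by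
    intro x hx y hy h
    have : (x : Fin n → ℚ) = (y : Fin n → ℚ) := by simpa using h
    exact Subtype.ext this
  have hxTval : ((∑ t ∈ Th, qV t • t : V) : Fin n → ℚ) = v := by
    rw [show ((∑ t ∈ Th, qV t • t : V) : Fin n → ℚ)
        = ∑ t ∈ Th, qV t • (t : Fin n → ℚ) by
      rw [AddSubmonoidClass.coe_finset_sum]; rfl]
    rw [hTh, Finset.sum_image hinjliftT]
    rw [Finset.sum_attach T (fun t => q t • t)]
    exact hvT.symm
  have hxT : x = ∑ t ∈ Th, qV t • t := Subtype.ext hxTval.symm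
  have hkey := key b N c huniV hspanN Th hThN hThli x czV hxN qV hxT
  have hzq : ∀ t ∈ T, ∃ z : ℤ, (z : ℚ) = q t := by
    intro t ht
    obtain ⟨z, hz⟩ := hkey ⟨t, hmemV t (hTM t ht)⟩ ((hThmem _).mpr ht)
    exact ⟨z, hz⟩
  choose zf hzf using hzq
  refine ⟨fun w => if h : w ∈ T then (zf w h).toNat else 0, ?_⟩
  have h1 : ∀ t ∈ T, ((if h : t ∈ T then (zf t h).toNat else 0 : ℕ) : ℚ) = q t := by
    intro t ht
    have hz0 : 0 ≤ zf t ht := by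
      have h0 := hq t
      rw [← hzf t ht] at h0
      exact_mod_cast h0
    rw [dif_pos ht, ← hzf t ht]
    exact_mod_cast congrArg (fun z : ℤ => (z : ℚ)) (Int.toNat_of_nonneg hz0)
  calc v = ∑ t ∈ T, q t • t := hvT
    _ = ∑ t ∈ T, ((if h : t ∈ T then (zf t h).toNat else 0 : ℕ) : ℚ) • t :=
      Finset.sum_congr rfl fun t ht => by rw [h1 t ht]
    _ = ∑ w ∈ S, ((if h : w ∈ T then (zf w h).toNat else 0 : ℕ) : ℚ) • w :=
      Finset.sum_subset hTS (fun w _ hwT => by rw [dif_neg hwT]; norm_num)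
end

section
/- Let M ⊆ ℚ^n be an almost unimodular set of rank d and volume m, and let {v1,…,vd} ⊆ M be a primitive subset (i.e., det(v1,…,vd) = ±m). Then every vector of M is an integer linear combination of v1,…,vd, i.e., M ⊆ ℤ(v1,…,vd). -/
/-- Let `M ⊆ ℚ^n` be an almost unimodular set of rank `d` and volume `m`, and let
`{v1,…,vd} ⊆ M` be a primitive subset (i.e. `det(v1,…,vd) = ±m`). Then every vector of `M`
is an integer linear combination of `v1,…,vd`. -/
theorem stmt5 {n d : ℕ} (M : Finset (Fin n → ℚ))
    (b : Module.Basis (Fin d) ℚ (Submodule.span ℚ (M : Set (Fin n → ℚ))))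
    (m : ℚ)
    (hint : ∀ w : Fin d → M, ∃ z : ℤ, detT M b w = (z : ℚ) * m)
    (hvol : ∃ w : Fin d → M, detT M b w = m)
    (v : Fin d → M) (hprim : detT M b v = m ∨ detT M b v = -m) :
    ∀ u ∈ M, ∃ c : Fin d → ℤ, u = ∑ i, (c i : ℚ) • (v i : Fin n → ℚ) := by
  classical
  set lift : M → Submodule.span ℚ (M : Set (Fin n → ℚ)) := fun u =>
    ⟨(u : Fin n → ℚ), Submodule.subset_span (Finset.mem_coe.mpr u.2)⟩ with hliftdef
  set rep : M → (Fin d → ℚ) := fun u j => b.repr (lift u) j with hrepdef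
  set f := (Matrix.detRowAlternating (R := ℚ) (n := Fin d)).toMultilinearMap with hf
  have hdetT : ∀ w : Fin d → M,
      detT M b w = f (fun i => rep (w i)) := fun w => rfl
  -- m ≠ 0
  have hm : m ≠ 0 := by
    intro h0
    have hb : ∀ j : Fin d, ∃ q : (Fin n → ℚ) → ℚ,
        ∑ u ∈ M, q u • u = ((b j : Submodule.span ℚ (M : Set (Fin n → ℚ))) : Fin n → ℚ) :=
      fun j => (Submodule.mem_span_finset.mp (b j).2).imp fun _ h => h.2
    choose q hq using hb
    have hlift : ∀ j : Fin d,
        (b j : Submodule.span ℚ (M : Set (Fin n → ℚ))) = ∑ u ∈ M.attach, q j u.1 • lift u := by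
      intro j
      apply Subtype.ext
      rw [← hq j]
      push_cast
      rw [Finset.sum_attach M (fun x => q j x • x)]
    have hrow : ∀ j : Fin d, (Pi.single j 1 : Fin d → ℚ)
        = ∑ u ∈ M.attach, q j u.1 • rep u := by
      intro j
      have := congrArg (fun x => ⇑(b.repr x)) (hlift j)
      simp only [Module.Basis.repr_self, map_sum, map_smul] at this
      rw [Finsupp.single_eq_pi_single] at this
      rw [this]
      ext k
      simp [hrepdef, Finsupp.coe_smul]
    have h1 : (1 : ℚ) = f (fun j : Fin d => (Pi.single j 1 : Fin d → ℚ)) := by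
      have : (Matrix.of fun j : Fin d => (Pi.single j 1 : Fin d → ℚ)) = 1 := by
        ext i k
        simp [Matrix.one_apply, Pi.single_apply, eq_comm]
      calc (1 : ℚ) = Matrix.det (1 : Matrix (Fin d) (Fin d) ℚ) := (Matrix.det_one).symm
        _ = _ := by rw [← this]; rfl
    rw [funext hrow] at h1
    rw [f.map_sum_finset (fun i u => q i u.1 • rep u) (fun _ => M.attach)] at h1
    have : ∀ r ∈ Fintype.piFinset (fun _ : Fin d => M.attach),
        f (fun i => q i (r i).1 • rep (r i)) = 0 := by
      intro r _
      rw [f.map_smul_univ]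
      rw [← hdetT r]
      obtain ⟨z, hz⟩ := hint r
      rw [hz, h0]
      simp
    rw [Finset.sum_eq_zero this] at h1
    exact one_ne_zero h1
  -- main argument
  intro u hu
  set A : Matrix (Fin d) (Fin d) ℚ := Matrix.of fun i => rep (v i) with hA
  have hdetA : A.det = detT M b v := rfl
  set y : Fin d → ℚ := rep ⟨u, hu⟩ with hy
  -- Cramer coefficients are integer multiples of m
  have hcram : ∀ i : Fin d, ∃ z : ℤ, (A.updateRow i y).det = (z : ℚ) * m := by
    intro i
    obtain ⟨z, hz⟩ := hint (Function.update v i ⟨u, hu⟩)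
    refine ⟨z, ?_⟩
    rw [← hz, hdetT]
    congr 1
    funext i'
    by_cases h : i' = i
    · subst h
      rw [Matrix.updateRow_self]
      simp [hy, Function.update_self]
    · rw [Matrix.updateRow_ne h]
      simp only [Function.update_of_ne h]
      rfl
  choose z hz using hcram
  -- sign
  obtain ⟨ε, hε1, hεdet⟩ : ∃ ε : ℤ, (ε = 1 ∨ ε = -1) ∧ A.det = (ε : ℚ) * m := by
    rcases hprim with h | h
    · exact ⟨1, Or.inl rfl, by rw [hdetA, h]; push_cast; ring⟩
    · exact ⟨-1, Or.inr rfl, by rw [hdetA, h]; push_cast; ring⟩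
  refine ⟨fun i => ε * z i, ?_⟩
  -- first show y = ∑ i, (ε * z i : ℚ) • A i
  have hcramer := Matrix.mulVec_cramer A.transpose y
  have hyeq : y = fun j => ∑ i, ((ε * z i : ℤ) : ℚ) * A i j := by
    funext j
    have h1 : (Matrix.mulVec A.transpose (Matrix.cramer A.transpose y)) j = ∑ i, ((z i : ℚ) * m) * A i j := by
      simp only [Matrix.mulVec, dotProduct, Matrix.transpose_apply]
      refine Finset.sum_congr rfl fun i _ => ?_
      rw [Matrix.cramer_transpose_apply, hz i]
      ring
    have h2 : ((Matrix.det A.transpose) • y) j = ((ε : ℚ) * m) * y j := by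
      rw [Matrix.det_transpose, hεdet]; simp [mul_comm]
    rw [hcramer] at h1
    rw [h2] at h1
    have hε2 : (ε : ℚ) * ε = 1 := by
      rcases hε1 with h | h <;> subst h <;> norm_num
    have h3 : ∑ i, (z i : ℚ) * A i j = (ε : ℚ) * y j := by
      apply mul_left_cancel₀ hm
      rw [Finset.mul_sum, show (m * ((ε : ℚ) * y j)) = (ε : ℚ) * m * y j by ring, h1]
      exact Finset.sum_congr rfl fun i _ => by ring
    have : y j = (ε : ℚ) * ∑ i, (z i : ℚ) * A i j := by
      rw [h3]; linear_combination (-(y j)) * hε2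
    rw [this, Finset.mul_sum]
    push_cast
    refine Finset.sum_congr rfl fun i _ => by ring
  -- lift back to ℚ^n
  have hreprs : b.repr (lift ⟨u, hu⟩) = b.repr (∑ i, ((ε * z i : ℤ) : ℚ) • lift (v i)) := by
    ext j
    rw [map_sum]
    simp only [map_smul, Finsupp.coe_finset_sum, Finsupp.coe_smul, Finset.sum_apply,
      Pi.smul_apply, smul_eq_mul]
    have := congrFun hyeq j
    simpa [hy, hrepdef, hA] using this
  have hPeq : lift ⟨u, hu⟩ = ∑ i, ((ε * z i : ℤ) : ℚ) • lift (v i) := b.repr.injective hreprs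
  have := congrArg (Subtype.val) hPeq
  push_cast at this ⊢
  simpa using this
end

section
/- Let M ⊆ ℚ^n be an almost unimodular set of rank d and volume m. Suppose {v0; v1,…,vr} is an ENSS in M whose ℚ≥0-combination for v0 involves only linearly independent vectors v1,…,vd from M, and that v1,…,vd span a d-dimensional space. Then |det(v1,…,vd)| ≠ m. -/
open Matrix in
theorem intRep {n d : ℕ} (M : Finset (Fin n → ℚ))
    (b : Module.Basis (Fin d) ℚ (Submodule.span ℚ (M : Set (Fin n → ℚ))))
    (m : ℚ) (hm : m ≠ 0)
    (hint : ∀ w : Fin d → M, ∃ z : ℤ, detT M b w = (z : ℚ) * m)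
    (v : Fin d → M)
    (εz : ℤ) (hε2 : (εz : ℚ) * (εz : ℚ) = 1)
    (hdet : detT M b v = (εz : ℚ) * m)
    (w : Fin n → ℚ) (hw : w ∈ M) :
    ∃ z : Fin d → ℤ, w = ∑ i, (z i : ℚ) • (v i : Fin n → ℚ) := by
  set vS : Fin d → Submodule.span ℚ (M : Set (Fin n → ℚ)) := fun i => ⟨(v i : Fin n → ℚ),
    Submodule.subset_span (Finset.mem_coe.mpr (v i).2)⟩ with hvS
  set A : Matrix (Fin d) (Fin d) ℚ := Matrix.of fun i j => b.repr (vS i) j with hA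
  have hAdet : A.det = detT M b v := rfl
  set wS : Submodule.span ℚ (M : Set (Fin n → ℚ)) :=
    ⟨w, Submodule.subset_span (Finset.mem_coe.mpr hw)⟩ with hwS
  set brw : Fin d → ℚ := fun j => b.repr wS j with hbrw
  have hcram : ∀ i, ∃ z : ℤ, Matrix.cramer Aᵀ brw i = (z : ℚ) * m := by
    intro i
    obtain ⟨z, hz⟩ := hint (Function.update v i ⟨w, hw⟩)
    refine ⟨z, ?_⟩
    rw [Matrix.cramer_apply, Matrix.updateCol_transpose, Matrix.det_transpose]
    rw [← hz]
    unfold detT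
    congr 1
    funext k j
    by_cases hk : k = i
    · subst hk
      simp [Matrix.updateRow_self, hbrw, hwS]
    · simp [Matrix.updateRow_ne hk, Function.update_of_ne hk, hA, hvS]
  choose zc hzc using hcram
  have hε0 : (εz : ℚ) ≠ 0 := by intro h; rw [h] at hε2; simp at hε2
  have hdm : A.det ≠ 0 := by rw [hAdet, hdet]; exact mul_ne_zero hε0 hm
  set x : Fin d → ℚ := fun i => (A.det)⁻¹ * Matrix.cramer Aᵀ brw i with hx
  have hxz : ∀ i, x i = ((εz * zc i : ℤ) : ℚ) := by
    intro i
    have h1 : x i * A.det = ((εz * zc i : ℤ) : ℚ) * A.det := by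
      calc x i * A.det = (A.det)⁻¹ * A.det * (Matrix.cramer Aᵀ brw i) := by rw [hx]; ring
        _ = (zc i : ℚ) * m := by rw [inv_mul_cancel₀ hdm, one_mul, hzc i]
        _ = ((εz : ℚ) * (εz : ℚ)) * ((zc i : ℚ) * m) := by rw [hε2, one_mul]
        _ = ((εz * zc i : ℤ) : ℚ) * A.det := by rw [hAdet, hdet]; push_cast; ring
    exact mul_right_cancel₀ hdm h1
  have hmv : Aᵀ.mulVec x = brw := by
    have hc := Matrix.mulVec_cramer Aᵀ brw
    have h2 : Aᵀ.mulVec x = (A.det)⁻¹ • (Aᵀ.mulVec (Matrix.cramer Aᵀ brw)) := by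
      rw [hx, ← Matrix.mulVec_smul]
      rfl
    rw [h2, hc, Matrix.det_transpose, smul_smul, inv_mul_cancel₀ hdm, one_smul]
  have hwsum : wS = ∑ i, x i • vS i := by
    apply b.repr.injective
    rw [map_sum]
    ext j
    simp only [Finsupp.coe_finset_sum, Finset.sum_apply, _root_.map_smul, Finsupp.coe_smul,
      Pi.smul_apply, smul_eq_mul]
    have h3 := congrFun hmv j
    simp only [Matrix.mulVec, dotProduct, Matrix.transpose_apply] at h3
    exact h3.symm.trans (Finset.sum_congr rfl fun i _ => mul_comm _ _)
  refine ⟨fun i => εz * zc i, ?_⟩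
  have h4 := congrArg (Subtype.val) hwsum
  simpa [hxz] using h4


open Matrix in
theorem detTne {n d : ℕ} (M : Finset (Fin n → ℚ))
    (b : Module.Basis (Fin d) ℚ (Submodule.span ℚ (M : Set (Fin n → ℚ))))
    (v : Fin d → M)
    (hli : LinearIndependent ℚ (fun i : Fin d => (v i : Fin n → ℚ))) :
    detT M b v ≠ 0 := by
  unfold detT
  have hli1 : LinearIndependent ℚ (fun i : Fin d => (⟨(v i : Fin n → ℚ),
      Submodule.subset_span (Finset.mem_coe.mpr (v i).2)⟩ :
      Submodule.span ℚ (M : Set (Fin n → ℚ)))) := by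
    apply LinearIndependent.of_comp (Submodule.span ℚ (M : Set (Fin n → ℚ))).subtype
    exact hli
  let L : Submodule.span ℚ (M : Set (Fin n → ℚ)) →ₗ[ℚ] (Fin d → ℚ) :=
    (Finsupp.linearEquivFunOnFinite ℚ ℚ (Fin d)).toLinearMap ∘ₗ b.repr.toLinearMap
  have hLinj : Function.Injective L :=
    (Finsupp.linearEquivFunOnFinite ℚ ℚ (Fin d)).injective.comp b.repr.injective
  have hli2 := hli1.map' L (LinearMap.ker_eq_bot.mpr hLinj)
  have hrows : LinearIndependent ℚ (fun i => (Matrix.of fun i j =>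
      b.repr (⟨(v i : Fin n → ℚ), Submodule.subset_span (Finset.mem_coe.mpr (v i).2)⟩ :
      Submodule.span ℚ (M : Set (Fin n → ℚ))) j) i) :=
    hli2
  have hU := Matrix.linearIndependent_rows_iff_isUnit.mp hrows
  exact ((Matrix.isUnit_iff_isUnit_det _).mp hU).ne_zero


/-- Let `M ⊆ ℚ^n` be an almost unimodular set of rank `d` and volume `m`. Suppose
`{v0; v1,…,vr}` is an ENSS in `M` (here `E ⊆ M` is the nonsaturated set `{v1,…,vr}` and
`v0 ∈ (ℤ(E) ∩ ℚ≥0(E)) \ ℤ≥0(E)`) whose `ℚ≥0`-combination with coefficients in `[0,1)`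
involves only `d` linearly independent vectors `v1,…,vd` of `E` (so they span a
`d`-dimensional space). Then `|det(v1,…,vd)| ≠ m`. -/
theorem stmt7 {n d : ℕ} (M : Finset (Fin n → ℚ))
    (b : Module.Basis (Fin d) ℚ (Submodule.span ℚ (M : Set (Fin n → ℚ))))
    (m : ℚ)
    (hint : ∀ w : Fin d → M, ∃ z : ℤ, detT M b w = (z : ℚ) * m)
    (hvol : ∃ w : Fin d → M, detT M b w = m)
    (E : Finset (Fin n → ℚ)) (hE : E ⊆ M)
    (hEns : ¬ Saturated E)
    (v0 : Fin n → ℚ)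
    (hz : memZSpan E v0) (hqn : memQnnSpan E v0) (hnn : ¬ memNSpan E v0)
    (v : Fin d → M) (hvE : ∀ i, (v i : Fin n → ℚ) ∈ E)
    (hli : LinearIndependent ℚ (fun i : Fin d => (v i : Fin n → ℚ)))
    (q : Fin d → ℚ) (hq01 : ∀ i, 0 ≤ q i ∧ q i < 1)
    (hcomb : v0 = ∑ i, q i • (v i : Fin n → ℚ)) :
    detT M b v ≠ m ∧ detT M b v ≠ -m := by
  classical
  have key : ∀ εz : ℤ, ((εz : ℚ) * (εz : ℚ) = 1) → detT M b v = (εz : ℚ) * m → False := by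
    intro εz hε2 hdet
    have hA0 : detT M b v ≠ 0 := detTne M b v hli
    have hm : m ≠ 0 := by
      intro h; rw [h, mul_zero] at hdet; exact hA0 hdet
    have hrepE : ∀ w ∈ E, ∃ z : Fin d → ℤ, w = ∑ i, (z i : ℚ) • (v i : Fin n → ℚ) :=
      fun w hw => intRep M b m hm hint v εz hε2 hdet w (hE hw)
    set g : (Fin n → ℚ) → Fin d → ℤ :=
      fun w => if h : w ∈ E then Classical.choose (hrepE w h) else 0 with hg
    have hgspec : ∀ w ∈ E, w = ∑ i, ((g w i : ℚ)) • (v i : Fin n → ℚ) := by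
      intro w hw
      rw [hg]; simp only [dif_pos hw]
      exact Classical.choose_spec (hrepE w hw)
    obtain ⟨c, hc⟩ := hz
    set N : Fin d → ℤ := fun i => ∑ w ∈ E, c w * g w i with hN
    have hv0 : v0 = ∑ i, ((N i : ℚ)) • (v i : Fin n → ℚ) := by
      rw [hc]
      have step : ∀ w ∈ E, (c w : ℚ) • w
          = ∑ i, ((c w * g w i : ℤ) : ℚ) • (v i : Fin n → ℚ) := by
        intro w hw
        rw [congrArg (fun u => (c w : ℚ) • u) (hgspec w hw), Finset.smul_sum]
        refine Finset.sum_congr rfl fun i _ => ?_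
        rw [smul_smul]; push_cast; ring_nf
      rw [Finset.sum_congr rfl step, Finset.sum_comm]
      refine Finset.sum_congr rfl fun i _ => ?_
      rw [hN]
      push_cast
      rw [Finset.sum_smul]
    have hzero : ∑ i, (q i - (N i : ℚ)) • (v i : Fin n → ℚ) = 0 := by
      simp only [sub_smul, Finset.sum_sub_distrib]
      rw [← hcomb, ← hv0, sub_self]
    have hqN : ∀ i, q i = (N i : ℚ) := by
      intro i
      have := Fintype.linearIndependent_iff.mp hli (fun i => q i - (N i : ℚ)) hzero i
      linarith [this]
    have hq0 : ∀ i, q i = 0 := by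
      intro i
      have h1 := (hq01 i).1
      have h2 := (hq01 i).2
      rw [hqN i] at h1 h2
      have hNi : N i = 0 := by
        have l1 : (0:ℤ) ≤ N i := by exact_mod_cast h1
        have l2 : N i < 1 := by exact_mod_cast h2
        omega
      rw [hqN i, hNi]
      norm_num
    have hv00 : v0 = 0 := by
      rw [hcomb]
      simp [hq0]
    exact hnn ⟨fun _ => 0, by simp [hv00]⟩
  constructor
  · intro h; exact key 1 (by norm_num) (by simpa using h)
  · intro h; refine key (-1) (by norm_num) ?_; rw [h]; push_cast; ring
end

section
/- Let M ⊆ ℚ^n be an almost unimodular set of rank d such that every nonzero determinant of a d-tuple of vectors from M equals ±m or ±2m, and suppose M is not hereditarily normal. Let {v0; v1,…,vr} be an ENSS in M with corresponding ℚ≥0-combination v0 = q1·v1 + … + ql·vl over linearly independent vectors v1,…,vl with all q_i ∈ [0,1). Then every coefficient q_i belongs to {0, 1/2}. -/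
theorem detUpSum {d : ℕ} (A : Matrix (Fin d) (Fin d) ℚ) (i : Fin d) {α : Type*} (t : Finset α)
    (f : α → (Fin d → ℚ)) :
    (A.updateRow i (∑ u ∈ t, f u)).det = ∑ u ∈ t, (A.updateRow i (f u)).det := by
  classical
  induction t using Finset.induction with
  | empty =>
    rw [Finset.sum_empty, Finset.sum_empty,
      show (0 : Fin d → ℚ) = (0:ℚ) • (0 : Fin d → ℚ) from (zero_smul ℚ _).symm,
      Matrix.det_updateRow_smul]
    simp
  | insert a s h ih =>
    rw [Finset.sum_insert h, Matrix.det_updateRow_add, ih, Finset.sum_insert h]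

/-- Let `M ⊆ ℚ^n` be an almost unimodular set of rank `d` and volume `m` such that every
nonzero determinant of a `d`-tuple of vectors from `M` equals `±m` or `±2m`, and suppose
`M` is not hereditarily normal. Let `{v0; v1,…,vr}` be an ENSS in `M` (with nonsaturated
set `E ⊆ M`) whose `ℚ≥0`-combination `v0 = q1·v1 + … + ql·vl` runs over linearly
independent vectors `v1,…,vl ∈ E` with all `qi ∈ [0,1)`. Then every `qi ∈ {0, 1/2}`. -/
theorem stmt8 {n d : ℕ} (M : Finset (Fin n → ℚ))
    (b : Module.Basis (Fin d) ℚ (Submodule.span ℚ (M : Set (Fin n → ℚ))))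
    (m : ℚ)
    (hvol : ∃ w : Fin d → M, detT M b w = m)
    (hval : ∀ w : Fin d → M, detT M b w = 0 ∨ detT M b w = m ∨ detT M b w = -m ∨
      detT M b w = 2 * m ∨ detT M b w = -(2 * m))
    (hnhn : ¬ ∀ S ⊆ M, Saturated S)
    (E : Finset (Fin n → ℚ)) (hE : E ⊆ M)
    (hEns : ¬ Saturated E)
    (v0 : Fin n → ℚ)
    (hz : memZSpan E v0) (hqn : memQnnSpan E v0) (hnn : ¬ memNSpan E v0)
    (l : ℕ) (v : Fin l → (Fin n → ℚ)) (hvE : ∀ i, v i ∈ E)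
    (hli : LinearIndependent ℚ v)
    (q : Fin l → ℚ) (hq01 : ∀ i, 0 ≤ q i ∧ q i < 1)
    (hcomb : v0 = ∑ i, q i • v i) :
    ∀ i, q i = 0 ∨ q i = 1 / 2 := by
  classical
  obtain ⟨ρ, hρ⟩ := LinearMap.exists_extend
    (p := Submodule.span ℚ (M : Set (Fin n → ℚ))) (b.equivFun.toLinearMap)
  have hρmem : ∀ (u : Fin n → ℚ) (h : u ∈ Submodule.span ℚ (M : Set (Fin n → ℚ))), ρ u = b.equivFun ⟨u, h⟩ := fun u h =>
    LinearMap.congr_fun hρ ⟨u, h⟩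
  have hdetT : ∀ wt : Fin d → M,
      detT M b wt = (Matrix.of fun i j => ρ ((wt i : Fin n → ℚ)) j).det := by
    intro wt
    unfold detT

    congr 1
    ext i j
    simp only [Matrix.of_apply]
    rw [hρmem _ (Submodule.subset_span (Finset.mem_coe.mpr (wt i).2)), Module.Basis.equivFun_apply]
  -- extend v to a "basis" inside M
  have hsub : Set.range v ⊆ (M : Set (Fin n → ℚ)) := by
    rintro _ ⟨i, rfl⟩; exact hE (hvE i)
  obtain ⟨B, hBM, hvB, hMspan, hBli⟩ : ∃ B ⊆ (M : Set (Fin n → ℚ)), Set.range v ⊆ B ∧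
      (M : Set (Fin n → ℚ)) ⊆ Submodule.span ℚ B ∧ LinearIndependent ℚ ((↑) : B → Fin n → ℚ) := by
    obtain ⟨B, h1, h2, h3, h4⟩ := exists_linearIndepOn_extension (K := ℚ) (v := id) ((linearIndepOn_id_range_iff hli.injective).mpr hli) hsub
    exact ⟨B, h1, h2, by simpa using h3, h4⟩
  haveI : Fintype B := (M.finite_toSet.subset hBM).fintype
  have hdisj : Disjoint (Submodule.span ℚ (M : Set (Fin n → ℚ))) (LinearMap.ker ρ) := by
    rw [Submodule.disjoint_def]
    intro x hx hker
    have h0 : b.equivFun ⟨x, hx⟩ = 0 := by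
      rw [← hρmem x hx]; exact LinearMap.mem_ker.mp hker
    have : (⟨x, hx⟩ : Submodule.span ℚ (M : Set (Fin n → ℚ))) = 0 := by
      apply b.equivFun.injective; simpa using h0
    exact congrArg Subtype.val this
  have hspanB_le : Submodule.span ℚ B ≤ Submodule.span ℚ (M : Set (Fin n → ℚ)) := Submodule.span_mono hBM
  have gBli : LinearIndependent ℚ (fun x : B => ρ (x : Fin n → ℚ)) := by
    refine hBli.map (f := ρ) ?_
    refine Disjoint.mono_left ?_ hdisj
    rw [Subtype.range_coe]
    exact hspanB_le
  have hspanB : Submodule.span ℚ B = Submodule.span ℚ (M : Set (Fin n → ℚ)) :=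
    le_antisymm hspanB_le (Submodule.span_le.mpr hMspan)
  have hmap : Submodule.map ρ (Submodule.span ℚ (M : Set (Fin n → ℚ))) = ⊤ := by
    rw [eq_top_iff]
    rintro y -
    refine Submodule.mem_map.mpr ⟨((b.equivFun.symm y : Submodule.span ℚ (M : Set (Fin n → ℚ))) :
      Fin n → ℚ), (b.equivFun.symm y).2, ?_⟩
    rw [hρmem _ (b.equivFun.symm y).2, Subtype.eta]
    exact b.equivFun.apply_symm_apply y
  have gBtop : ⊤ ≤ Submodule.span ℚ (Set.range fun x : B => ρ (x : Fin n → ℚ)) := by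
    have : (Set.range fun x : B => ρ (x : Fin n → ℚ)) = ρ '' B := by
      rw [show (fun x : B => ρ (x : Fin n → ℚ)) = ρ ∘ ((↑) : B → (Fin n → ℚ)) from rfl,
        Set.range_comp, Subtype.range_coe]
    rw [this, Submodule.span_image, hspanB, hmap]
  let cB : Module.Basis B ℚ (Fin d → ℚ) := Module.Basis.mk gBli gBtop
  have hcard : Fintype.card B = d := by
    have h1 := Module.finrank_eq_card_basis cB
    rw [Module.finrank_fin_fun] at h1
    omega
  let e : Fin d ≃ B := (Fintype.equivFinOfCardEq hcard).symm
  let w : Fin d → (Fin n → ℚ) := fun i => ((e i : B) : Fin n → ℚ)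
  have hwM : ∀ i, w i ∈ M := fun i => hBM (e i).2
  let wt : Fin d → M := fun i => ⟨w i, hwM i⟩
  let A : Matrix (Fin d) (Fin d) ℚ := Matrix.of fun i j => ρ (w i) j
  have hArow : ∀ i, A i = ρ (w i) := fun i => rfl
  have hAli : LinearIndependent ℚ (fun i => A i) := gBli.comp e e.injective
  have hAdet : A.det ≠ 0 := by
    have := (Matrix.isUnit_iff_isUnit_det A).mp (Matrix.linearIndependent_rows_iff_isUnit.mp hAli)
    exact this.ne_zero
  have hdA : detT M b wt = A.det := hdetT wt
  -- the main argument
  intro i0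
  have hvBel : ∀ j, v j ∈ B := fun j => hvB ⟨j, rfl⟩
  let σ : Fin l → Fin d := fun j => e.symm ⟨v j, hvBel j⟩
  have hwσ : ∀ j, w (σ j) = v j := fun j => by simp [w, σ]
  have hσinj : Function.Injective σ := by
    intro a b hab
    have h2 := congrArg w hab
    rw [hwσ, hwσ] at h2
    exact hli.injective h2
  set i := σ i0 with hi
  obtain ⟨c, hc⟩ := hz
  have hρv0z : ρ v0 = ∑ u ∈ E, (c u : ℚ) • ρ u := by
    rw [hc, map_sum]; simp only [map_smul]
  have hρv0q : ρ v0 = ∑ j, q j • A (σ j) := by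
    rw [hcomb, map_sum]
    refine Finset.sum_congr rfl fun j _ => ?_
    rw [map_smul, hArow, hwσ]
  have hD2 : (A.updateRow i (ρ v0)).det = q i0 * A.det := by
    rw [hρv0q, detUpSum]
    rw [Finset.sum_eq_single i0]
    · rw [Matrix.det_updateRow_smul, ← hi, Matrix.updateRow_eq_self]
    · intro j _ hj
      have hne : σ j ≠ i := fun h => hj (hσinj (h.trans hi))
      rw [Matrix.det_updateRow_smul,
        Matrix.det_zero_of_row_eq (Ne.symm hne)
          (by rw [Matrix.updateRow_self, Matrix.updateRow_ne hne]), mul_zero]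
    · intro h; exact absurd (Finset.mem_univ i0) h
  have hkex : ∀ u : Fin n → ℚ, ∃ k : ℤ, u ∈ E → (A.updateRow i (ρ u)).det = m * k := by
    intro u
    by_cases hu : u ∈ E
    · have huM : u ∈ M := hE hu
      set wt' : Fin d → M := fun i' => if i' = i then ⟨u, huM⟩ else wt i' with hwt'
      have hmat : (Matrix.of fun i' j => ρ ((wt' i' : Fin n → ℚ)) j) = A.updateRow i (ρ u) := by
        ext i' j
        by_cases h : i' = i
        · subst h; simp [hwt', Matrix.updateRow_self]
        · simp [hwt', h, Matrix.updateRow_ne h, hArow, wt]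
      have hv5 := hval wt'
      rw [hdetT wt', hmat] at hv5
      rcases hv5 with h|h|h|h|h
      exacts [⟨0, fun _ => by rw [h]; simp⟩, ⟨1, fun _ => by rw [h]; simp⟩,
        ⟨-1, fun _ => by rw [h]; push_cast; ring⟩, ⟨2, fun _ => by rw [h]; push_cast; ring⟩,
        ⟨-2, fun _ => by rw [h]; push_cast; ring⟩]
    · exact ⟨0, fun h => absurd h hu⟩
  choose k hks using hkex
  have hD1 : (A.updateRow i (ρ v0)).det = m * ((∑ u ∈ E, c u * k u : ℤ) : ℚ) := by
    rw [hρv0z, detUpSum,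
      Finset.sum_congr rfl (fun u hu => by rw [Matrix.det_updateRow_smul, hks u hu])]
    push_cast
    rw [Finset.mul_sum]
    exact Finset.sum_congr rfl fun u _ => by ring
  set K : ℤ := ∑ u ∈ E, c u * k u with hK
  have key : q i0 * A.det = m * (K : ℚ) := by rw [← hD2, hD1]
  have hfin : ∀ KK : ℤ, 2 * q i0 = (KK : ℚ) → q i0 = 0 ∨ q i0 = 1 / 2 := by
    intro KK hKK
    obtain ⟨h0, h1⟩ := hq01 i0
    have h0' : (0:ℤ) ≤ KK := by exact_mod_cast (by linarith : (0:ℚ) ≤ (KK:ℚ))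
    have h1' : KK < 2 := by exact_mod_cast (by linarith : (KK:ℚ) < 2)
    interval_cases KK
    · left; rw [show ((0:ℤ):ℚ) = 0 by norm_num] at hKK; linarith
    · right; rw [show ((1:ℤ):ℚ) = 1 by norm_num] at hKK; linarith
  have hv6 := hval wt
  rw [hdA] at hv6
  rcases hv6 with h|h|h|h|h
  · exact absurd h hAdet
  · have hm : m ≠ 0 := fun h0 => hAdet (by rw [h, h0])
    rw [h] at key
    refine hfin (2 * K) ?_
    have h2 : (2 * q i0) * m = ((2 * K : ℤ) : ℚ) * m := by push_cast; linear_combination 2 * key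
    exact mul_right_cancel₀ hm h2
  · have hm : m ≠ 0 := fun h0 => hAdet (by rw [h, h0]; ring)
    rw [h] at key
    refine hfin (-(2 * K)) ?_
    have h2 : (2 * q i0) * m = ((-(2 * K) : ℤ) : ℚ) * m := by push_cast; linear_combination -2 * key
    exact mul_right_cancel₀ hm h2
  · have hm : m ≠ 0 := fun h0 => hAdet (by rw [h, h0]; ring)
    rw [h] at key
    refine hfin K ?_
    have h2 : (2 * q i0) * m = ((K : ℤ) : ℚ) * m := by push_cast; linear_combination key
    exact mul_right_cancel₀ hm h2
  · have hm : m ≠ 0 := fun h0 => hAdet (by rw [h, h0]; ring)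
    rw [h] at key
    refine hfin (-K) ?_
    have h2 : (2 * q i0) * m = ((-K : ℤ) : ℚ) * m := by push_cast; linear_combination -key
    exact mul_right_cancel₀ hm h2
end

section
/- Let M ⊆ ℚ^n be an almost unimodular set of rank d and volume m such that every nonzero determinant of a d-tuple of vectors from M equals ±m or ±2m, and fix a basis (v̄1,…,v̄d) of vectors from M with det(v̄1,…,v̄d) = 2m. For v ∈ M, let S(v) denote the set of indices i such that the i-th coordinate of v in the basis (v̄1,…,v̄d) equals ±1/2. Then for any two vectors v1, v2 ∈ M with S(v1) ≠ ∅ and S(v2) ≠ ∅, one has S(v1) = S(v2). -/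
/-- Coordinates of a vector of `M` with respect to the basis `b`. -/
noncomputable def co {n d : ℕ} (M : Finset (Fin n → ℚ))
    (b : Module.Basis (Fin d) ℚ (Submodule.span ℚ (M : Set (Fin n → ℚ)))) (x : M) : Fin d → ℚ :=
  fun j => b.repr ⟨(x : Fin n → ℚ), Submodule.subset_span (Finset.mem_coe.mpr x.2)⟩ j

lemma detT_eq {n d : ℕ} (M : Finset (Fin n → ℚ))
    (b : Module.Basis (Fin d) ℚ (Submodule.span ℚ (M : Set (Fin n → ℚ))))
    (w : Fin d → M) : detT M b w = (Matrix.of fun i => co M b (w i)).det := rfl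

lemma matrix_update {n d : ℕ} (M : Finset (Fin n → ℚ))
    (b : Module.Basis (Fin d) ℚ (Submodule.span ℚ (M : Set (Fin n → ℚ))))
    (w : Fin d → M) (k : Fin d) (x : M) :
    (Matrix.of fun i => co M b (Function.update w k x i))
      = (Matrix.of fun i => co M b (w i)).updateRow k (co M b x) := by
  ext i j
  by_cases hik : i = k <;>
    simp [Function.update_apply, Matrix.updateRow_apply, hik]

lemma co_sum {n d : ℕ} (M : Finset (Fin n → ℚ))
    (b : Module.Basis (Fin d) ℚ (Submodule.span ℚ (M : Set (Fin n → ℚ))))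
    (x : M) (vb : Fin d → M) (c : Fin d → ℚ)
    (h : (x : Fin n → ℚ) = ∑ k, c k • (vb k : Fin n → ℚ)) :
    co M b x = ∑ k, c k • co M b (vb k) := by
  have hX : (⟨(x : Fin n → ℚ), Submodule.subset_span (Finset.mem_coe.mpr x.2)⟩ :
        Submodule.span ℚ (M : Set (Fin n → ℚ)))
      = ∑ k, c k • (⟨(vb k : Fin n → ℚ), Submodule.subset_span (Finset.mem_coe.mpr (vb k).2)⟩ :
        Submodule.span ℚ (M : Set (Fin n → ℚ))) := by
    apply Subtype.ext
    push_cast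
    exact h
  funext j
  show b.repr _ j = _
  rw [hX, map_sum]
  simp only [map_smul, Finsupp.coe_finset_sum, Finset.sum_apply, Finsupp.coe_smul,
    Pi.smul_apply, smul_eq_mul, co]

lemma vec_combo {d : ℕ} {V : Type*} [AddCommGroup V] [Module ℚ V]
    (u : Fin d → V) (i : Fin d) (c1 c2 : Fin d → ℚ) (h : c1 i ≠ 0) :
    (∑ l, c2 l • u l) =
      ∑ l, (if l = i then c2 i / c1 i else c2 l - c2 i / c1 i * c1 l) •
        Function.update u i (∑ k, c1 k • u k) l := by
  have e1 : ∑ l, (if l = i then c2 i / c1 i else c2 l - c2 i / c1 i * c1 l) •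
        Function.update u i (∑ k, c1 k • u k) l
      = (c2 i / c1 i) • (∑ k, c1 k • u k)
        + ∑ l ∈ Finset.univ.erase i, (c2 l - c2 i / c1 i * c1 l) • u l := by
    rw [← Finset.add_sum_erase _ _ (Finset.mem_univ i)]
    congr 1
    · simp
    · refine Finset.sum_congr rfl fun l hl => ?_
      have hli : l ≠ i := (Finset.mem_erase.mp hl).1
      rw [if_neg hli, Function.update_of_ne hli]
  have e2 : (c2 i / c1 i) • (∑ k, c1 k • u k)
      = (c2 i / c1 i * c1 i) • u i
        + ∑ l ∈ Finset.univ.erase i, (c2 i / c1 i * c1 l) • u l := by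
    rw [Finset.smul_sum, ← Finset.add_sum_erase _ _ (Finset.mem_univ i), smul_smul]
    congr 1
    refine Finset.sum_congr rfl fun l _ => ?_
    rw [smul_smul]
  calc (∑ l, c2 l • u l)
      = c2 i • u i + ∑ l ∈ Finset.univ.erase i, c2 l • u l :=
        (Finset.add_sum_erase _ _ (Finset.mem_univ i)).symm
    _ = (c2 i / c1 i * c1 i) • u i
        + ∑ l ∈ Finset.univ.erase i,
            ((c2 i / c1 i * c1 l) + (c2 l - c2 i / c1 i * c1 l)) • u l := by
        rw [div_mul_cancel₀ _ h]
        congr 1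
        refine Finset.sum_congr rfl fun l _ => ?_
        congr 1
        ring
    _ = (c2 i / c1 i * c1 i) • u i
        + (∑ l ∈ Finset.univ.erase i, (c2 i / c1 i * c1 l) • u l
          + ∑ l ∈ Finset.univ.erase i, (c2 l - c2 i / c1 i * c1 l) • u l) := by
        rw [← Finset.sum_add_distrib]
        congr 1
        refine Finset.sum_congr rfl fun l _ => ?_
        rw [← add_smul]
    _ = (c2 i / c1 i) • (∑ k, c1 k • u k)
        + ∑ l ∈ Finset.univ.erase i, (c2 l - c2 i / c1 i * c1 l) • u l := by
        rw [e2, add_assoc]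
    _ = _ := e1.symm

lemma det_double_update {d : ℕ} (A : Matrix (Fin d) (Fin d) ℚ) (i j : Fin d) (hij : j ≠ i)
    (c1 c2 : Fin d → ℚ) (h : c1 i ≠ 0) :
    ((A.updateRow i (∑ l, c1 l • A l)).updateRow j (∑ l, c2 l • A l)).det
      = (c1 i * c2 j - c1 j * c2 i) * A.det := by
  have h1 : (∑ l, c2 l • A l)
      = ∑ l, (if l = i then c2 i / c1 i else c2 l - c2 i / c1 i * c1 l) •
          (A.updateRow i (∑ k, c1 k • A k)) l := by
    exact vec_combo (fun k => A k) i c1 c2 h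
  rw [h1, Matrix.det_updateRow_sum, Matrix.det_updateRow_sum, if_neg hij,
    smul_eq_mul, smul_eq_mul]
  field_simp

lemma scale_cases (m t : ℚ) (hm : m ≠ 0)
    (h : t * (2 * m) = 0 ∨ t * (2 * m) = m ∨ t * (2 * m) = -m ∨
      t * (2 * m) = 2 * m ∨ t * (2 * m) = -(2 * m)) :
    t = 0 ∨ t = 1 / 2 ∨ t = -(1 / 2) ∨ t = 1 ∨ t = -1 := by
  have h2 : (2 : ℚ) * m ≠ 0 := mul_ne_zero two_ne_zero hm
  rcases h with h | h | h | h | h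
  · exact Or.inl (mul_right_cancel₀ h2 (by rw [h]; ring))
  · exact Or.inr (Or.inl (mul_right_cancel₀ h2 (by rw [h]; ring)))
  · exact Or.inr (Or.inr (Or.inl (mul_right_cancel₀ h2 (by rw [h]; ring))))
  · exact Or.inr (Or.inr (Or.inr (Or.inl (mul_right_cancel₀ h2 (by rw [h]; ring)))))
  · exact Or.inr (Or.inr (Or.inr (Or.inr (mul_right_cancel₀ h2 (by rw [h]; ring)))))

lemma half_cases_contra (a c x y z : ℚ)
    (ha : a = 1 / 2 ∨ a = -(1 / 2)) (hc : c = 1 / 2 ∨ c = -(1 / 2))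
    (hx : x = 0 ∨ x = 1 ∨ x = -1)
    (hy : y = 0 ∨ y = 1 / 2 ∨ y = -(1 / 2) ∨ y = 1 ∨ y = -1)
    (hz : z = 0 ∨ z = 1 / 2 ∨ z = -(1 / 2) ∨ z = 1 ∨ z = -1)
    (h : z = a * c - x * y) : False := by
  rcases ha with rfl | rfl <;> rcases hc with rfl | rfl <;>
    rcases hx with rfl | rfl | rfl <;> rcases hy with rfl | rfl | rfl | rfl | rfl <;>
    rcases hz with rfl | rfl | rfl | rfl | rfl <;> norm_num at h

lemma exists_detT_ne_zero {n d : ℕ} (M : Finset (Fin n → ℚ))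
    (b : Module.Basis (Fin d) ℚ (Submodule.span ℚ (M : Set (Fin n → ℚ)))) :
    ∃ w : Fin d → M, detT M b w ≠ 0 := by
  classical
  have hspan : Submodule.span ℚ (Set.range (co M b)) = ⊤ := by
    have h2 : Set.range (co M b)
        = ⇑b.equivFun '' {x : Submodule.span ℚ (M : Set (Fin n → ℚ)) |
            (x : Fin n → ℚ) ∈ (M : Set (Fin n → ℚ))} := by
      ext y
      constructor
      · rintro ⟨x, rfl⟩
        exact ⟨⟨(x : Fin n → ℚ), Submodule.subset_span (Finset.mem_coe.mpr x.2)⟩,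
          Finset.mem_coe.mpr x.2, rfl⟩
      · rintro ⟨v, hv, rfl⟩
        refine ⟨⟨(v : Fin n → ℚ), Finset.mem_coe.mp hv⟩, ?_⟩
        rfl
    rw [h2, ← LinearEquiv.coe_coe, ← Submodule.map_span, Submodule.span_setOf_mem_eq_top, Submodule.map_top,
      LinearEquiv.range]
  obtain ⟨t, hts, htspan, htli⟩ := exists_linearIndependent ℚ (Set.range (co M b))
  rw [hspan] at htspan
  have htfin : t.Finite := (Set.finite_range (co M b)).subset hts
  haveI := htfin.fintype
  let B : Module.Basis t ℚ (Fin d → ℚ) :=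
    Module.Basis.mk htli (by rw [Subtype.range_coe]; exact htspan.ge)
  have hcard : Fintype.card t = d := by
    have h1 := Module.finrank_eq_card_basis B
    rw [Module.finrank_fin_fun] at h1
    omega
  let g : Fin d ≃ t := (Fintype.equivFinOfCardEq hcard).symm
  choose f hf using fun k : Fin d => hts (g k).2
  refine ⟨f, ?_⟩
  have hli : LinearIndependent ℚ (fun k : Fin d => co M b (f k)) := by
    rw [show (fun k : Fin d => co M b (f k)) = ((↑) : t → (Fin d → ℚ)) ∘ g from
      funext fun k => hf k]
    exact htli.comp g g.injective
  have hunit : IsUnit (Matrix.of fun k => co M b (f k)) :=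
    Matrix.linearIndependent_rows_iff_isUnit.mp hli
  have hne : (Matrix.of fun k => co M b (f k)).det ≠ 0 :=
    ((Matrix.isUnit_iff_isUnit_det _).mp hunit).ne_zero
  exact hne

lemma detT_update {n d : ℕ} (M : Finset (Fin n → ℚ))
    (b : Module.Basis (Fin d) ℚ (Submodule.span ℚ (M : Set (Fin n → ℚ))))
    (vb : Fin d → M) (x : M) (c : Fin d → ℚ)
    (hx : co M b x = ∑ k, c k • co M b (vb k)) (k : Fin d) :
    detT M b (Function.update vb k x) = c k * detT M b vb := by
  rw [detT_eq, matrix_update, detT_eq]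
  have h1 : co M b x = ∑ l, c l • (Matrix.of fun i => co M b (vb i)) l := hx
  rw [h1, Matrix.det_updateRow_sum, smul_eq_mul]

lemma detT_update2 {n d : ℕ} (M : Finset (Fin n → ℚ))
    (b : Module.Basis (Fin d) ℚ (Submodule.span ℚ (M : Set (Fin n → ℚ))))
    (vb : Fin d → M) (x1 x2 : M) (c1 c2 : Fin d → ℚ) (i j : Fin d) (hij : j ≠ i)
    (h : c1 i ≠ 0)
    (hx1 : co M b x1 = ∑ k, c1 k • co M b (vb k))
    (hx2 : co M b x2 = ∑ k, c2 k • co M b (vb k)) :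
    detT M b (Function.update (Function.update vb i x1) j x2)
      = (c1 i * c2 j - c1 j * c2 i) * detT M b vb := by
  rw [detT_eq, matrix_update, matrix_update, detT_eq]
  have e1 : co M b x1 = ∑ l, c1 l • (Matrix.of fun i' => co M b (vb i')) l := hx1
  have e2 : co M b x2 = ∑ l, c2 l • (Matrix.of fun i' => co M b (vb i')) l := hx2
  rw [e1, e2, det_double_update _ i j hij c1 c2 h]

lemma subset_aux {n d : ℕ} (M : Finset (Fin n → ℚ))
    (b : Module.Basis (Fin d) ℚ (Submodule.span ℚ (M : Set (Fin n → ℚ))))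
    (m : ℚ) (hm : m ≠ 0)
    (hval : ∀ w : Fin d → M, detT M b w = 0 ∨ detT M b w = m ∨ detT M b w = -m ∨
      detT M b w = 2 * m ∨ detT M b w = -(2 * m))
    (vb : Fin d → M) (hvb : detT M b vb = 2 * m)
    (v1 v2 : Fin n → ℚ) (h1 : v1 ∈ M) (h2 : v2 ∈ M)
    (c1 c2 : Fin d → ℚ)
    (hc1 : v1 = ∑ i, c1 i • (vb i : Fin n → ℚ))
    (hc2 : v2 = ∑ i, c2 i • (vb i : Fin n → ℚ))
    (hS1 : {i : Fin d | c1 i = 1 / 2 ∨ c1 i = -(1 / 2)}.Nonempty) :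
    {i : Fin d | c2 i = 1 / 2 ∨ c2 i = -(1 / 2)} ⊆
      {i : Fin d | c1 i = 1 / 2 ∨ c1 i = -(1 / 2)} := by
  classical
  have hx1 : co M b ⟨v1, h1⟩ = ∑ k, c1 k • co M b (vb k) := co_sum M b ⟨v1, h1⟩ vb c1 hc1
  have hx2 : co M b ⟨v2, h2⟩ = ∑ k, c2 k • co M b (vb k) := co_sum M b ⟨v2, h2⟩ vb c2 hc2
  have single : ∀ (x : M) (c : Fin d → ℚ),
      co M b x = (∑ k, c k • co M b (vb k)) → ∀ k,
      c k = 0 ∨ c k = 1 / 2 ∨ c k = -(1 / 2) ∨ c k = 1 ∨ c k = -1 := by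
    intro x c hx k
    have hd : detT M b (Function.update vb k x) = c k * (2 * m) := by
      rw [detT_update M b vb x c hx k, hvb]
    have hv := hval (Function.update vb k x)
    rw [hd] at hv
    exact scale_cases m (c k) hm hv
  intro j hj
  simp only [Set.mem_setOf_eq] at hj ⊢
  by_contra hj1
  obtain ⟨i, hi⟩ := hS1
  simp only [Set.mem_setOf_eq] at hi
  have hij : j ≠ i := by
    rintro rfl
    exact hj1 hi
  have h1i : c1 i ≠ 0 := by
    rcases hi with h | h <;> rw [h] <;> norm_num
  have h5j := single ⟨v1, h1⟩ c1 hx1 j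
  have hc1j : c1 j = 0 ∨ c1 j = 1 ∨ c1 j = -1 := by tauto
  have h5i := single ⟨v2, h2⟩ c2 hx2 i
  have hdd : detT M b (Function.update (Function.update vb i ⟨v1, h1⟩) j ⟨v2, h2⟩)
      = (c1 i * c2 j - c1 j * c2 i) * (2 * m) := by
    rw [detT_update2 M b vb ⟨v1, h1⟩ ⟨v2, h2⟩ c1 c2 i j hij h1i hx1 hx2, hvb]
  have hv := hval (Function.update (Function.update vb i ⟨v1, h1⟩) j ⟨v2, h2⟩)
  rw [hdd] at hv
  have hz := scale_cases m _ hm hv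
  exact half_cases_contra (c1 i) (c2 j) (c1 j) (c2 i) _ hi hj hc1j h5i hz rfl

/-- Let `M ⊆ ℚ^n` be an almost unimodular set of rank `d` and volume `m` all of whose
nonzero determinants equal `±m` or `±2m`, and fix a `d`-tuple `(v̄1,…,v̄d)` of vectors from
`M` with `det(v̄1,…,v̄d) = 2m`. For `v ∈ M` expanded as `v = ∑ ci • v̄i`, let `S(v)` be the
set of indices with `ci = ±1/2`. Then for any `v1, v2 ∈ M` with `S(v1) ≠ ∅` and
`S(v2) ≠ ∅`, one has `S(v1) = S(v2)`. -/
theorem stmt9 {n d : ℕ} (M : Finset (Fin n → ℚ))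
    (b : Module.Basis (Fin d) ℚ (Submodule.span ℚ (M : Set (Fin n → ℚ))))
    (m : ℚ)
    (hvol : ∃ w : Fin d → M, detT M b w = m)
    (hval : ∀ w : Fin d → M, detT M b w = 0 ∨ detT M b w = m ∨ detT M b w = -m ∨
      detT M b w = 2 * m ∨ detT M b w = -(2 * m))
    (vb : Fin d → M) (hvb : detT M b vb = 2 * m)
    (v1 v2 : Fin n → ℚ) (h1 : v1 ∈ M) (h2 : v2 ∈ M)
    (c1 c2 : Fin d → ℚ)
    (hc1 : v1 = ∑ i, c1 i • (vb i : Fin n → ℚ))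
    (hc2 : v2 = ∑ i, c2 i • (vb i : Fin n → ℚ))
    (hS1 : {i : Fin d | c1 i = 1 / 2 ∨ c1 i = -(1 / 2)}.Nonempty)
    (hS2 : {i : Fin d | c2 i = 1 / 2 ∨ c2 i = -(1 / 2)}.Nonempty) :
    {i : Fin d | c1 i = 1 / 2 ∨ c1 i = -(1 / 2)} =
      {i : Fin d | c2 i = 1 / 2 ∨ c2 i = -(1 / 2)} := by
  have hm : m ≠ 0 := by
    intro h0
    obtain ⟨w, hw⟩ := exists_detT_ne_zero M b
    apply hw
    subst h0
    rcases hval w with h | h | h | h | h <;> simpa using h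
  exact Set.Subset.antisymm
    (subset_aux M b m hm hval vb hvb v2 v1 h2 h1 c2 c1 hc2 hc1 hS2)
    (subset_aux M b m hm hval vb hvb v1 v2 h1 h2 c1 c2 hc1 hc2 hS1)
end

section
/- Let n ≥ 3 and let λ = (ℓ1,…,ℓn) ∈ ℤ^n satisfy ℓ1 ≥ ℓ2 ≥ … ≥ ℓn ≥ 0 and ℓ1 + … + ℓn ≥ 2. Then the vector e1 + e2 belongs to the convex hull of the orbit of λ under the group of all signed permutations of the coordinates, i.e., e1 + e2 ∈ conv{(ε1·ℓ_{σ(1)}, …, εn·ℓ_{σ(n)}) : σ a permutation of {1,…,n}, εi ∈ {±1}}. -/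
/-- Let `n ≥ 3` and let `λ = (ℓ1,…,ℓn) ∈ ℤ^n` satisfy `ℓ1 ≥ ℓ2 ≥ … ≥ ℓn ≥ 0` and
`ℓ1 + … + ℓn ≥ 2`. Then `e1 + e2` belongs to the convex hull (in `ℚ^n`) of the orbit of
`λ` under the group of all signed permutations of the coordinates. -/
theorem stmt10 {n : ℕ} (hn : 3 ≤ n) (l : Fin n → ℤ)
    (hmono : ∀ i j : Fin n, i ≤ j → l j ≤ l i) (hnonneg : ∀ i, 0 ≤ l i)
    (hsum : 2 ≤ ∑ i, l i) :
    (fun i : Fin n => if (i : ℕ) < 2 then (1 : ℚ) else 0) ∈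
      convexHull ℚ {x : Fin n → ℚ | ∃ σ : Equiv.Perm (Fin n), ∃ ε : Fin n → ℚ,
        (∀ i, ε i = 1 ∨ ε i = -1) ∧ x = fun i => ε i * (l (σ i) : ℚ)} := by
  set S : Set (Fin n → ℚ) := {x : Fin n → ℚ | ∃ σ : Equiv.Perm (Fin n), ∃ ε : Fin n → ℚ,
        (∀ i, ε i = 1 ∨ ε i = -1) ∧ x = fun i => ε i * (l (σ i) : ℚ)} with hSdef
  set T := convexHull ℚ S with hTdef
  have hconv : Convex ℚ T := convex_convexHull ℚ S
  have hSsub : S ⊆ T := subset_convexHull ℚ S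
  have h0n : 0 < n := by omega
  have h1n : 1 < n := by omega
  let i0 : Fin n := ⟨0, h0n⟩
  let i1 : Fin n := ⟨1, h1n⟩
  -- flip invariance of S
  have hflipS : ∀ (j : Fin n) (x : Fin n → ℚ), x ∈ S →
      (fun i => if i = j then -x i else x i) ∈ S := by
    rintro j x ⟨σ, ε, hε, rfl⟩
    refine ⟨σ, fun i => if i = j then -ε i else ε i, ?_, ?_⟩
    · intro i
      by_cases h : i = j
      · subst h
        rcases hε i with h' | h' <;> simp [h']
      · rcases hε i with h' | h' <;> simp [h, h']
    · funext i
      by_cases h : i = j <;> simp [h] <;> ring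
  -- flip invariance of T
  have hflipT : ∀ (j : Fin n) (x : Fin n → ℚ), x ∈ T →
      (fun i => if i = j then -x i else x i) ∈ T := by
    intro j x hx
    have hsub : T ⊆ {x : Fin n → ℚ | (fun i => if i = j then -x i else x i) ∈ T} := by
      apply convexHull_min
      · intro y hy
        exact hSsub (hflipS j y hy)
      · intro y hy z hz a b ha hb hab
        have h : (fun i => if i = j then -(a • y + b • z) i else (a • y + b • z) i)
            = a • (fun i => if i = j then -y i else y i)
              + b • (fun i => if i = j then -z i else z i) := by
          funext i
          by_cases h : i = j <;>
            simp [h, Pi.add_apply, Pi.smul_apply, smul_eq_mul] <;> ring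
        exact Set.mem_setOf_eq ▸ (h ▸ hconv hy hz ha hb hab)
    exact hsub hx
  -- permutation invariance of T
  have hpermT : ∀ (π : Equiv.Perm (Fin n)) (x : Fin n → ℚ), x ∈ T →
      (fun i => x (π i)) ∈ T := by
    intro π x hx
    have hsub : T ⊆ {x : Fin n → ℚ | (fun i => x (π i)) ∈ T} := by
      apply convexHull_min
      · rintro y ⟨σ, ε, hε, rfl⟩
        exact hSsub ⟨π.trans σ, fun i => ε (π i), fun i => hε (π i), rfl⟩
      · intro y hy z hz a b ha hb hab
        have h : (fun i => (a • y + b • z) (π i))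
            = a • (fun i => y (π i)) + b • (fun i => z (π i)) := by
          funext i; simp
        exact Set.mem_setOf_eq ▸ (h ▸ hconv hy hz ha hb hab)
    exact hsub hx
  -- the cancellation sequence
  let v : ℕ → Fin n → ℚ := fun k i => if 2 ≤ (i : ℕ) ∧ (i : ℕ) < k then 0 else (l i : ℚ)
  have hv : ∀ k, v k ∈ T := by
    intro k
    induction k with
    | zero =>
      have : v 0 = fun i => (1 : ℚ) * (l ((1 : Equiv.Perm (Fin n)) i) : ℚ) := by
        funext i; simp [v]
      exact this ▸ hSsub ⟨1, fun _ => 1, fun _ => Or.inl rfl, rfl⟩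
    | succ k ih =>
      by_cases hk : 2 ≤ k ∧ k < n
      · set j : Fin n := ⟨k, hk.2⟩ with hj
        have heq : v (k + 1) = (1/2 : ℚ) • v k + (1/2 : ℚ) • (fun i => if i = j then -(v k i) else v k i) := by
          funext i
          have hin : (i : ℕ) < n := i.isLt
          by_cases h : i = j
          · have hik : (i : ℕ) = k := by rw [h]
            simp only [v, Pi.add_apply, Pi.smul_apply, smul_eq_mul, if_pos h]
            rw [if_pos (by omega : 2 ≤ (i:ℕ) ∧ (i:ℕ) < k + 1),
              if_neg (by omega : ¬(2 ≤ (i:ℕ) ∧ (i:ℕ) < k))]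
            ring
          · have hik : (i : ℕ) ≠ k := fun hc => h (Fin.ext hc)
            simp only [v, Pi.add_apply, Pi.smul_apply, smul_eq_mul, if_neg h]
            have hcond : (2 ≤ (i:ℕ) ∧ (i:ℕ) < k + 1) ↔ (2 ≤ (i:ℕ) ∧ (i:ℕ) < k) := by omega
            rw [if_congr hcond rfl rfl]
            by_cases hc : 2 ≤ (i:ℕ) ∧ (i:ℕ) < k <;> simp [hc] <;> ring
        rw [heq]
        exact hconv ih (hflipT j _ ih) (by norm_num) (by norm_num) (by norm_num)
      · have heq : v (k + 1) = v k := by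
          funext i
          have hin : (i : ℕ) < n := i.isLt
          have hcond : (2 ≤ (i:ℕ) ∧ (i:ℕ) < k + 1) ↔ (2 ≤ (i:ℕ) ∧ (i:ℕ) < k) := by omega
          simp only [v]
          rw [if_congr hcond rfl rfl]
        rw [heq]; exact ih
  -- q = (l 0, l 1, 0, ..., 0)
  have hq : v n ∈ T := hv n
  have hqval : ∀ i : Fin n, v n i = if 2 ≤ (i : ℕ) then 0 else (l i : ℚ) := by
    intro i
    have hin : (i : ℕ) < n := i.isLt
    simp only [v]
    by_cases h : 2 ≤ (i : ℕ) <;> simp [h, hin]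
  -- sum bound : 2 ≤ l i0 + l i1
  have hm : 2 ≤ l i0 + l i1 := by
    by_cases h1 : 1 ≤ l i1
    · have := hmono i0 i1 (Fin.le_def.mpr (by norm_num))
      omega
    · have hz : l i1 = 0 := le_antisymm (by omega) (hnonneg i1)
      have hall : ∀ b : Fin n, b ≠ i0 → l b = 0 := by
        intro b hb
        have hb1 : (1 : ℕ) ≤ (b : ℕ) := by
          rcases Nat.eq_zero_or_pos (b : ℕ) with h | h
          · exact absurd (Fin.ext h) hb
          · exact h
        have := hmono i1 b (Fin.le_def.mpr hb1)
        have := hnonneg b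
        omega
      have : (∑ i, l i) = l i0 := Finset.sum_eq_single i0 (fun b _ hb => hall b hb)
        (fun h => absurd (Finset.mem_univ i0) h)
      omega
  set m : ℚ := ((l i0 : ℚ) + (l i1 : ℚ)) with hmdef
  have hm2 : (2 : ℚ) ≤ m := by
    rw [hmdef]
    exact_mod_cast hm
  have hmpos : (0 : ℚ) < m := by linarith
  -- u = (m/2, m/2, 0, ..., 0)
  let u : Fin n → ℚ := (1/2 : ℚ) • v n + (1/2 : ℚ) • (fun i => v n (Equiv.swap i0 i1 i))
  have hu : u ∈ T := hconv hq (hpermT (Equiv.swap i0 i1) _ hq)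
    (by norm_num) (by norm_num) (by norm_num)
  have huval : ∀ i : Fin n, u i = if (i : ℕ) < 2 then m / 2 else 0 := by
    intro i
    have h01 : i0 ≠ i1 := by
      intro h
      have : (0 : ℕ) = 1 := congrArg Fin.val h
      omega
    by_cases h0 : i = i0
    · simp only [u, Pi.add_apply, Pi.smul_apply, smul_eq_mul, h0, Equiv.swap_apply_left,
        hqval, i0, i1]
      norm_num [hmdef]
      ring
    · by_cases h1 : i = i1
      · simp only [u, Pi.add_apply, Pi.smul_apply, smul_eq_mul, h1, Equiv.swap_apply_right,
          hqval, i0, i1]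
        norm_num [hmdef]
        ring
      · have hi2 : 2 ≤ (i : ℕ) := by
          have : (i : ℕ) ≠ 0 := fun hc => h0 (Fin.ext hc)
          have : (i : ℕ) ≠ 1 := fun hc => h1 (Fin.ext hc)
          omega
        simp only [u, Pi.add_apply, Pi.smul_apply, smul_eq_mul,
          Equiv.swap_apply_of_ne_of_ne h0 h1, hqval]
        rw [if_pos hi2, if_neg (Nat.not_lt.mpr hi2)]
        ring
  -- w = -u
  let w : Fin n → ℚ := fun i => if i = i1 then
      -(if i = i0 then -(u i) else u i) else (if i = i0 then -(u i) else u i)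
  have hw : w ∈ T := hflipT i1 _ (hflipT i0 u hu)
  have hwval : ∀ i : Fin n, w i = if (i : ℕ) < 2 then -(m / 2) else 0 := by
    intro i
    have h01 : i0 ≠ i1 := by
      intro h
      have : (0 : ℕ) = 1 := congrArg Fin.val h
      omega
    by_cases h0 : i = i0
    · have hne : ¬ i = i1 := by rw [h0]; exact h01
      have hw1 : w i = -(u i) := by simp only [w, if_neg hne, if_pos h0]
      have hv0 : ((i : Fin n) : ℕ) = 0 := by rw [h0]
      rw [hw1, huval, hv0]
      norm_num
    · by_cases h1 : i = i1
      · have hne0 : ¬ i = i0 := h0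
        have hw1 : w i = -(u i) := by
          simp only [w, if_pos h1, if_neg hne0]
        have hv1 : ((i : Fin n) : ℕ) = 1 := by rw [h1]
        rw [hw1, huval, hv1]
        norm_num
      · have hi2 : 2 ≤ (i : ℕ) := by
          have : (i : ℕ) ≠ 0 := fun hc => h0 (Fin.ext hc)
          have : (i : ℕ) ≠ 1 := fun hc => h1 (Fin.ext hc)
          omega
        simp only [w, if_neg h0, if_neg h1, huval]
        rw [if_neg (Nat.not_lt.mpr hi2), if_neg (Nat.not_lt.mpr hi2)]
  -- final convex combination
  have hfin : (fun i : Fin n => if (i : ℕ) < 2 then (1 : ℚ) else 0)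
      = ((m + 2) / (2 * m)) • u + ((m - 2) / (2 * m)) • w := by
    funext i
    simp only [Pi.add_apply, Pi.smul_apply, smul_eq_mul, huval, hwval]
    by_cases h : (i : ℕ) < 2
    · simp only [if_pos h]
      field_simp
      ring
    · simp [h]
  rw [hfin]
  exact hconv hu hw
    (by positivity)
    (div_nonneg (by linarith) (by linarith))
    (by field_simp; ring)
end

section
/- Let λ = (ℓ1,…,ℓn) ∈ ℤ^n with ℓ1 ≥ ℓ2 ≥ … ≥ ℓn ≥ 0 and ℓ1 ≥ 2. Then at least one of the vectors (2,0,…,0) and (2,1,0,…,0) belongs to the convex hull of the orbit of λ under the group of all signed permutations of the coordinates and has coordinate sum of the same parity as ℓ1 + … + ℓn. -/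
lemma key_mem {n : ℕ} (l : Fin n → ℤ) :
    ∀ d m : ℕ, m + d = n → ∀ σ : Equiv.Perm (Fin n), ∀ ε : Fin n → ℚ,
      (∀ i, ε i = 1 ∨ ε i = -1) →
      (fun i : Fin n => if m ≤ (i : ℕ) then (0 : ℚ) else ε i * (l (σ i) : ℚ)) ∈
        convexHull ℚ {x : Fin n → ℚ | ∃ σ : Equiv.Perm (Fin n), ∃ ε : Fin n → ℚ,
          (∀ i, ε i = 1 ∨ ε i = -1) ∧ x = fun i => ε i * (l (σ i) : ℚ)} := by
  intro d
  induction d with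
  | zero =>
    intro m hm σ ε hε
    apply subset_convexHull
    refine ⟨σ, ε, hε, ?_⟩
    funext i
    rw [if_neg (by have := i.2; omega)]
  | succ d ih =>
    intro m hm σ ε hε
    have hmn : m < n := by omega
    set j : Fin n := ⟨m, hmn⟩ with hj
    set ε' : Fin n → ℚ := Function.update ε j (-ε j) with hε'def
    have hε' : ∀ i, ε' i = 1 ∨ ε' i = -1 := by
      intro i
      by_cases h : i = j
      · rw [h, hε'def, Function.update_self]
        rcases hε j with h1 | h1 <;> simp [h1]
      · rw [hε'def, Function.update_of_ne h]; exact hε i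
    have h1 := ih (m + 1) (by omega) σ ε hε
    have h2 := ih (m + 1) (by omega) σ ε' hε'
    have hc := (convex_convexHull ℚ _) h1 h2
      (by norm_num : (0:ℚ) ≤ 1/2) (by norm_num : (0:ℚ) ≤ 1/2) (by norm_num)
    convert hc using 1
    funext i
    simp only [Pi.add_apply, Pi.smul_apply, smul_eq_mul]
    by_cases hi : (i : ℕ) = m
    · have hij : i = j := Fin.ext hi
      rw [if_pos (by omega), if_neg (by omega), if_neg (by omega)]
      rw [hij, hε'def, Function.update_self]
      ring
    · by_cases him : m ≤ (i : ℕ)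
      · rw [if_pos him, if_pos (by omega), if_pos (by omega)]; ring
      · rw [if_neg him, if_neg (by omega), if_neg (by omega)]
        rw [hε'def, Function.update_of_ne (fun h => hi (by rw [h]))]
        ring

lemma sum_two {n : ℕ} (hn : 2 ≤ n) (a b : ℚ) :
    (∑ i : Fin n, (if (i : ℕ) = 0 then a else if (i : ℕ) = 1 then b else 0)) = a + b := by
  have h : ∀ i : Fin n, (if (i : ℕ) = 0 then a else if (i : ℕ) = 1 then b else 0)
      = (if i = (⟨0, by omega⟩ : Fin n) then a else 0)
        + (if i = (⟨1, by omega⟩ : Fin n) then b else 0) := by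
    intro i
    by_cases h0 : (i : ℕ) = 0
    · simp [Fin.ext_iff, h0]
    · by_cases h1 : (i : ℕ) = 1
      · simp [Fin.ext_iff, h0, h1]
      · simp [Fin.ext_iff, h0, h1]
  rw [Finset.sum_congr rfl (fun i _ => h i), Finset.sum_add_distrib,
    Finset.sum_ite_eq', Finset.sum_ite_eq']
  simp

set_option maxHeartbeats 2000000 in
/-- Let `λ = (ℓ1,…,ℓn) ∈ ℤ^n` with `ℓ1 ≥ ℓ2 ≥ … ≥ ℓn ≥ 0` and `ℓ1 ≥ 2`. Then at least one
of the vectors `(2,0,…,0)` and `(2,1,0,…,0)` belongs to the convex hull of the orbit of `λ`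
under the group of all signed permutations of the coordinates and has coordinate sum of the
same parity as `ℓ1 + … + ℓn` (i.e. their difference is twice an integer). -/
theorem stmt11 {n : ℕ} (hn : 2 ≤ n) (l : Fin n → ℤ)
    (hmono : ∀ i j : Fin n, i ≤ j → l j ≤ l i) (hnonneg : ∀ i, 0 ≤ l i)
    (hl1 : 2 ≤ l ⟨0, by omega⟩) :
    ∃ w : Fin n → ℚ,
      (w = (fun i : Fin n => if (i : ℕ) = 0 then (2 : ℚ) else 0) ∨
       w = (fun i : Fin n => if (i : ℕ) = 0 then (2 : ℚ)
            else if (i : ℕ) = 1 then 1 else 0)) ∧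
      w ∈ convexHull ℚ {x : Fin n → ℚ | ∃ σ : Equiv.Perm (Fin n), ∃ ε : Fin n → ℚ,
        (∀ i, ε i = 1 ∨ ε i = -1) ∧ x = fun i => ε i * (l (σ i) : ℚ)} ∧
      ∃ k : ℤ, (∑ i, w i) - (∑ i, (l i : ℚ)) = 2 * (k : ℚ) := by
  set L : ℚ := (l ⟨0, by omega⟩ : ℚ) with hLdef
  set M : ℚ := (l ⟨1, by omega⟩ : ℚ) with hMdef
  have hL2 : (2 : ℚ) ≤ L := by rw [hLdef]; exact_mod_cast hl1
  have hLpos : (0 : ℚ) < L := by linarith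
  have hL0 : L ≠ 0 := ne_of_gt hLpos
  have hLi : ∀ i : Fin n, (i : ℕ) = 0 → (l i : ℚ) = L := by
    intro i hi
    have h : i = ⟨0, by omega⟩ := Fin.ext (by simpa using hi)
    rw [h, hLdef]
  have hMi : ∀ i : Fin n, (i : ℕ) = 1 → (l i : ℚ) = M := by
    intro i hi
    have h : i = ⟨1, by omega⟩ := Fin.ext (by simpa using hi)
    rw [h, hMdef]
  have hconv := convex_convexHull ℚ {x : Fin n → ℚ | ∃ σ : Equiv.Perm (Fin n), ∃ ε : Fin n → ℚ,
        (∀ i, ε i = 1 ∨ ε i = -1) ∧ x = fun i => ε i * (l (σ i) : ℚ)}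
  have hcastsum : (∑ i, (l i : ℚ)) = ((∑ i, l i : ℤ) : ℚ) := by push_cast; ring
  rcases Int.even_or_odd (∑ i, l i) with ⟨m, hm⟩ | ⟨m, hm⟩
  · -- even case : w = (2,0,...,0)
    refine ⟨_, Or.inl rfl, ?_, ?_⟩
    · have hA1 := key_mem l (n - 1) 1 (by omega) (Equiv.refl _) (fun _ => 1) (fun i => Or.inl rfl)
      have hA2 := key_mem l (n - 1) 1 (by omega) (Equiv.refl _)
        (fun i => if (i : ℕ) = 0 then -1 else 1)
        (fun i => by by_cases h : (i : ℕ) = 0 <;> simp [h])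
      have hmem := hconv hA1 hA2
        (div_nonneg (by linarith : (0:ℚ) ≤ L + 2) (by linarith : (0:ℚ) ≤ 2 * L))
        (div_nonneg (by linarith : (0:ℚ) ≤ L - 2) (by linarith : (0:ℚ) ≤ 2 * L))
        (show (L + 2) / (2 * L) + (L - 2) / (2 * L) = 1 by field_simp; ring)
      convert hmem using 1
      funext i
      simp only [Pi.add_apply, Pi.smul_apply, smul_eq_mul, Equiv.refl_apply]
      by_cases h0 : (i : ℕ) = 0
      · simp only [h0]
        norm_num
        rw [hLi i h0]
        field_simp
        ring
      · simp [h0, show 1 ≤ (i : ℕ) by omega]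
    · refine ⟨1 - m, ?_⟩
      have h2 : (∑ i : Fin n, (if (i : ℕ) = 0 then (2:ℚ) else 0))
          = ∑ i : Fin n, (if (i : ℕ) = 0 then (2:ℚ) else if (i : ℕ) = 1 then 0 else 0) := by
        apply Finset.sum_congr rfl
        intro i _
        by_cases h : (i : ℕ) = 0 <;> simp [h]
      rw [h2, sum_two hn, hcastsum, hm]
      push_cast
      ring
  · -- odd case
    by_cases hM : 1 ≤ l ⟨1, by omega⟩
    · -- w = (2,1,0,...,0) via (±L, ±M, 0, ..., 0)
      have hM1 : (1 : ℚ) ≤ M := by rw [hMdef]; exact_mod_cast hM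
      have hMpos : (0 : ℚ) < M := by linarith
      have hM0' : M ≠ 0 := ne_of_gt hMpos
      refine ⟨_, Or.inr rfl, ?_, ?_⟩
      · have hB : ∀ s t : ℚ, (s = 1 ∨ s = -1) → (t = 1 ∨ t = -1) →
            (fun i : Fin n => if 2 ≤ (i : ℕ) then (0:ℚ)
              else (if (i : ℕ) = 0 then s else if (i : ℕ) = 1 then t else 1)
                * (l (Equiv.refl (Fin n) i) : ℚ)) ∈
            convexHull ℚ {x : Fin n → ℚ | ∃ σ : Equiv.Perm (Fin n), ∃ ε : Fin n → ℚ,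
              (∀ i, ε i = 1 ∨ ε i = -1) ∧ x = fun i => ε i * (l (σ i) : ℚ)} := by
          intro s t hs ht
          exact key_mem l (n - 2) 2 (by omega) (Equiv.refl _) _
            (fun i => by
              by_cases h0 : (i : ℕ) = 0
              · simp [h0, hs]
              · by_cases h1 : (i : ℕ) = 1 <;> simp [h0, h1, ht])
        have hC : ∀ s : ℚ, (s = 1 ∨ s = -1) →
            (fun i : Fin n => if (i : ℕ) = 0 then s * L else if (i : ℕ) = 1 then (1:ℚ) else 0) ∈
            convexHull ℚ {x : Fin n → ℚ | ∃ σ : Equiv.Perm (Fin n), ∃ ε : Fin n → ℚ,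
              (∀ i, ε i = 1 ∨ ε i = -1) ∧ x = fun i => ε i * (l (σ i) : ℚ)} := by
          intro s hs
          have hmem := hconv (hB s 1 hs (Or.inl rfl)) (hB s (-1) hs (Or.inr rfl))
            (div_nonneg (by linarith : (0:ℚ) ≤ M + 1) (by linarith : (0:ℚ) ≤ 2 * M))
            (div_nonneg (by linarith : (0:ℚ) ≤ M - 1) (by linarith : (0:ℚ) ≤ 2 * M))
            (show (M + 1) / (2 * M) + (M - 1) / (2 * M) = 1 by field_simp; ring)
          convert hmem using 1
          funext i
          simp only [Pi.add_apply, Pi.smul_apply, smul_eq_mul, Equiv.refl_apply]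
          by_cases h0 : (i : ℕ) = 0
          · simp only [h0]
            norm_num
            rw [hLi i h0]
            field_simp
            ring
          · by_cases h1 : (i : ℕ) = 1
            · simp only [h0, h1]
              norm_num
              rw [hMi i h1]
              field_simp
              ring
            · simp [h0, h1, show 2 ≤ (i : ℕ) by omega]
        have hmem := hconv (hC 1 (Or.inl rfl)) (hC (-1) (Or.inr rfl))
          (div_nonneg (by linarith : (0:ℚ) ≤ L + 2) (by linarith : (0:ℚ) ≤ 2 * L))
          (div_nonneg (by linarith : (0:ℚ) ≤ L - 2) (by linarith : (0:ℚ) ≤ 2 * L))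
          (show (L + 2) / (2 * L) + (L - 2) / (2 * L) = 1 by field_simp; ring)
        convert hmem using 1
        funext i
        simp only [Pi.add_apply, Pi.smul_apply, smul_eq_mul]
        by_cases h0 : (i : ℕ) = 0
        · simp only [h0]
          norm_num
          field_simp
          ring
        · by_cases h1 : (i : ℕ) = 1
          · simp only [h0, h1]
            norm_num
            field_simp
            ring
          · simp [h0, h1]
      · refine ⟨1 - m, ?_⟩
        rw [sum_two hn, hcastsum, hm]
        push_cast
        ring
    · -- degenerate case: l i = 0 for i ≥ 1, L odd ≥ 3
      have hM0 : l ⟨1, by omega⟩ = 0 := by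
        have := hnonneg ⟨1, by omega⟩; omega
      have hz : ∀ i : Fin n, 1 ≤ (i : ℕ) → l i = 0 := by
        intro i hi
        have h1 := hmono ⟨1, by omega⟩ i (by simpa [Fin.le_def] using hi)
        have h2 := hnonneg i
        rw [hM0] at h1
        omega
      have hSL : (∑ i, l i) = l ⟨0, by omega⟩ := by
        rw [Finset.sum_eq_single (⟨0, by omega⟩ : Fin n)]
        · intro b _ hb
          apply hz
          simp [Fin.ext_iff] at hb
          omega
        · simp
      have hsum0 : l ⟨0, by omega⟩ = 2 * m + 1 := by rw [← hSL]; exact hm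
      have hl1' : (2 : ℤ) ≤ l ⟨0, by omega⟩ := hl1
      have hL3' : 3 ≤ l ⟨0, by omega⟩ := by omega
      have hL3 : (3 : ℚ) ≤ L := by rw [hLdef]; exact_mod_cast hL3'
      have hL1ne : L - 1 ≠ 0 := by intro h; rw [sub_eq_zero] at h; linarith [h ▸ hL2]
      refine ⟨_, Or.inr rfl, ?_, ?_⟩
      · have hD : ∀ s : ℚ, (s = 1 ∨ s = -1) →
            (fun i : Fin n => if 1 ≤ (i : ℕ) then (0:ℚ)
              else (if (i : ℕ) = 0 then s else 1) * (l (Equiv.refl (Fin n) i) : ℚ)) ∈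
            convexHull ℚ {x : Fin n → ℚ | ∃ σ : Equiv.Perm (Fin n), ∃ ε : Fin n → ℚ,
              (∀ i, ε i = 1 ∨ ε i = -1) ∧ x = fun i => ε i * (l (σ i) : ℚ)} := by
          intro s hs
          exact key_mem l (n - 1) 1 (by omega) (Equiv.refl _) _
            (fun i => by by_cases h0 : (i : ℕ) = 0 <;> simp [h0, hs])
        have hE : (fun i : Fin n => if (i : ℕ) = 1 then L else (0:ℚ)) ∈
            convexHull ℚ {x : Fin n → ℚ | ∃ σ : Equiv.Perm (Fin n), ∃ ε : Fin n → ℚ,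
              (∀ i, ε i = 1 ∨ ε i = -1) ∧ x = fun i => ε i * (l (σ i) : ℚ)} := by
          have hk := key_mem l (n - 2) 2 (by omega)
            (Equiv.swap ⟨0, by omega⟩ ⟨1, by omega⟩) (fun _ => 1) (fun i => Or.inl rfl)
          convert hk using 1
          funext i
          simp only [Equiv.swap_apply_def]
          by_cases h0 : (i : ℕ) = 0
          · have h : i = (⟨0, by omega⟩ : Fin n) := Fin.ext (by simpa using h0)
            rw [if_neg (by omega), if_neg (by omega), if_pos h, hM0]
            norm_num
          · by_cases h1 : (i : ℕ) = 1
            · have h : i = (⟨1, by omega⟩ : Fin n) := Fin.ext (by simpa using h1)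
              have hne : ¬ i = (⟨0, by omega⟩ : Fin n) := by simp [Fin.ext_iff, h0]
              rw [if_pos h1, if_neg (by omega), if_neg hne, if_pos h, hLdef]
              norm_num
            · rw [if_neg h1, if_pos (by omega)]
        have hF : (fun i : Fin n => if (i : ℕ) = 0 then 2 * L / (L - 1) else (0:ℚ)) ∈
            convexHull ℚ {x : Fin n → ℚ | ∃ σ : Equiv.Perm (Fin n), ∃ ε : Fin n → ℚ,
              (∀ i, ε i = 1 ∨ ε i = -1) ∧ x = fun i => ε i * (l (σ i) : ℚ)} := by
          have hmem := hconv (hD 1 (Or.inl rfl)) (hD (-1) (Or.inr rfl))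
            (div_nonneg (by linarith : (0:ℚ) ≤ L + 1) (by linarith : (0:ℚ) ≤ 2 * (L - 1)))
            (div_nonneg (by linarith : (0:ℚ) ≤ L - 3) (by linarith : (0:ℚ) ≤ 2 * (L - 1)))
            (show (L + 1) / (2 * (L - 1)) + (L - 3) / (2 * (L - 1)) = 1 by
              field_simp; ring)
          convert hmem using 1
          funext i
          simp only [Pi.add_apply, Pi.smul_apply, smul_eq_mul, Equiv.refl_apply]
          by_cases h0 : (i : ℕ) = 0
          · simp only [h0]
            norm_num
            rw [hLi i h0]
            field_simp
            ring
          · simp [h0, show 1 ≤ (i : ℕ) by omega]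
        have hmem := hconv hF hE
          (div_nonneg (by linarith : (0:ℚ) ≤ L - 1) (by linarith : (0:ℚ) ≤ L))
          (div_nonneg (by linarith : (0:ℚ) ≤ 1) (by linarith : (0:ℚ) ≤ L))
          (show (L - 1) / L + 1 / L = 1 by field_simp; ring)
        convert hmem using 1
        funext i
        simp only [Pi.add_apply, Pi.smul_apply, smul_eq_mul]
        by_cases h0 : (i : ℕ) = 0
        · simp only [h0]
          norm_num
          field_simp
        · by_cases h1 : (i : ℕ) = 1
          · simp only [h0, h1]
            norm_num
            field_simp
          · simp [h0, h1]
      · refine ⟨1 - m, ?_⟩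
        rw [sum_two hn, hcastsum, hm]
        push_cast
        ring
end

section
/- Let n ≥ 4 and let λ = (ℓ1,…,ℓn) ∈ ℚ^n be such that each 2ℓi is an odd integer, ℓ1 ≥ ℓ2 ≥ … ≥ ℓ_{n−1} ≥ |ℓn|, and ℓ1 ≥ 3/2. Then there exists a vector μ = (3/2, 1/2, 1/2, ℓ'4, …, ℓ'n), where each 2ℓ'i is an odd integer, such that μ lies in the convex hull of the orbit of λ under the group generated by coordinate permutations and sign changes of an even number of coordinates, and μ − λ ∈ ℤ^n with even coordinate sum. -/
namespace Stmt12Aux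

variable {n : ℕ}

def orbS (l : Fin n → ℚ) : Set (Fin n → ℚ) :=
  {x : Fin n → ℚ | ∃ σ : Equiv.Perm (Fin n), ∃ ε : Fin n → ℚ,
    (∀ i, ε i = 1 ∨ ε i = -1) ∧
    Even (Finset.univ.filter (fun i => ε i = -1)).card ∧
    x = fun i => ε i * l (σ i)}

lemma even_card_iff (p : Fin n → Prop) [DecidablePred p] :
    Even (Finset.univ.filter p).card ↔
      (∑ i : Fin n, (if p i then (1 : ZMod 2) else 0)) = 0 := by
  have h1 : ((Finset.univ.filter p).card : ZMod 2)
      = ∑ i : Fin n, (if p i then (1 : ZMod 2) else 0) := by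
    rw [Finset.card_filter]
    push_cast
    exact Finset.sum_congr rfl (fun i _ => by split <;> simp)
  rw [← h1, even_iff_two_dvd]
  exact (ZMod.natCast_eq_zero_iff _ 2).symm

lemma mem_orbS_self (l : Fin n → ℚ) : l ∈ orbS l := by
  refine ⟨1, fun _ => 1, fun i => Or.inl rfl, ?_, ?_⟩
  · have : (Finset.univ.filter (fun i : Fin n => (1:ℚ) = -1)) = ∅ := by
      apply Finset.filter_false_of_mem
      intro i _
      norm_num
    simp [this]
  · funext i; simp

lemma orbS_closed (l : Fin n → ℚ) (e : Equiv.Perm (Fin n)) (η : Fin n → ℚ)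
    (hη : ∀ i, η i = 1 ∨ η i = -1)
    (hc : Even (Finset.univ.filter (fun i => η i = -1)).card)
    {x : Fin n → ℚ} (hx : x ∈ orbS l) :
    (fun i => η i * x (e i)) ∈ orbS l := by
  obtain ⟨σ, ε, hε, hεc, rfl⟩ := hx
  refine ⟨e.trans σ, fun i => η i * ε (e i), ?_, ?_, ?_⟩
  · intro i
    rcases hη i with h | h <;> rcases hε (e i) with h' | h' <;>
      simp [h, h']
  · rw [even_card_iff]
    have key : ∀ i : Fin n, (if η i * ε (e i) = -1 then (1 : ZMod 2) else 0)
        = (if η i = -1 then (1 : ZMod 2) else 0) + (if ε (e i) = -1 then (1 : ZMod 2) else 0) := by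
      intro i
      rcases hη i with h | h <;> rcases hε (e i) with h' | h' <;>
        rw [h, h'] <;> norm_num <;> rfl
    rw [Finset.sum_congr rfl (fun i _ => key i), Finset.sum_add_distrib]
    have h2 : (∑ i : Fin n, (if ε (e i) = -1 then (1 : ZMod 2) else 0))
        = ∑ i : Fin n, (if ε i = -1 then (1 : ZMod 2) else 0) :=
      Equiv.sum_comp e (fun i => if ε i = -1 then (1 : ZMod 2) else 0)
    rw [h2, (even_card_iff _).mp hc, (even_card_iff _).mp hεc, add_zero]
  · funext i
    simp [Equiv.trans_apply, mul_assoc]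

def Tmap (e : Equiv.Perm (Fin n)) (η : Fin n → ℚ) : (Fin n → ℚ) →ₗ[ℚ] (Fin n → ℚ) where
  toFun x := fun i => η i * x (e i)
  map_add' x y := by funext i; simp [mul_add]
  map_smul' c x := by funext i; simp [smul_eq_mul]; ring

lemma hull_closed (l : Fin n → ℚ) (e : Equiv.Perm (Fin n)) (η : Fin n → ℚ)
    (hη : ∀ i, η i = 1 ∨ η i = -1)
    (hc : Even (Finset.univ.filter (fun i => η i = -1)).card)
    {z : Fin n → ℚ} (hz : z ∈ convexHull ℚ (orbS l)) :
    (fun i => η i * z (e i)) ∈ convexHull ℚ (orbS l) := by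
  have h : convexHull ℚ (orbS l) ⊆ (Tmap e η) ⁻¹' (convexHull ℚ (orbS l)) := by
    apply convexHull_min
    · intro x hx
      exact subset_convexHull ℚ (orbS l) (orbS_closed l e η hη hc hx)
    · exact (convex_convexHull ℚ (orbS l)).linear_preimage (Tmap e η)
  exact h hz

lemma move (l : Fin n → ℚ) {z : Fin n → ℚ} (hz : z ∈ convexHull ℚ (orbS l))
    {a b : Fin n} (hab : a ≠ b) {x y : ℚ}
    (h1 : |x + y| ≤ |z a + z b|) (h2 : |x - y| ≤ |z a - z b|) :
    Function.update (Function.update z a x) b y ∈ convexHull ℚ (orbS l) := by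
  classical
  set η : Fin n → ℚ := fun i => if i = a ∨ i = b then (-1:ℚ) else 1 with hηdef
  have hη : ∀ i, η i = 1 ∨ η i = -1 := by
    intro i; by_cases h : i = a ∨ i = b <;> simp [hηdef, h]
  have hfil : Finset.univ.filter (fun i => η i = -1) = {a, b} := by
    ext i
    simp only [Finset.mem_filter, Finset.mem_univ, true_and, Finset.mem_insert,
      Finset.mem_singleton]
    by_cases h : i = a ∨ i = b
    · simp [hηdef, h]
    · simp [hηdef, h]
      norm_num
  have hcη : Even (Finset.univ.filter (fun i => η i = -1)).card := by
    rw [hfil, Finset.card_insert_of_notMem (by simp [hab]), Finset.card_singleton]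
    exact even_two
  have hone : ∀ i : Fin n, ((fun _ : Fin n => (1:ℚ)) i = 1 ∨ (fun _ : Fin n => (1:ℚ)) i = -1) :=
    fun i => Or.inl rfl
  have honec : Even (Finset.univ.filter (fun i : Fin n => (fun _ : Fin n => (1:ℚ)) i = -1)).card := by
    have : (Finset.univ.filter (fun i : Fin n => (fun _ : Fin n => (1:ℚ)) i = -1)) = ∅ := by
      apply Finset.filter_false_of_mem; intro i _; norm_num
    simp [this]
  have hP2 : (fun i => z (Equiv.swap a b i)) ∈ convexHull ℚ (orbS l) := by
    have := hull_closed l (Equiv.swap a b) (fun _ => 1) hone honec hz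
    simpa using this
  have hP3 : (fun i => η i * z i) ∈ convexHull ℚ (orbS l) := by
    have := hull_closed l (Equiv.refl _) η hη hcη hz
    simpa using this
  have hP4 : (fun i => η i * z (Equiv.swap a b i)) ∈ convexHull ℚ (orbS l) :=
    hull_closed l (Equiv.swap a b) η hη hcη hz
  set u := z a + z b with hu
  set v := z a - z b with hv
  set α : ℚ := if hu0 : u = 0 then 0 else (x + y) / u with hαdef
  set β : ℚ := if hv0 : v = 0 then 0 else (x - y) / v with hβdef
  have hαu : α * u = x + y := by
    by_cases hu0 : u = 0
    · have h0 : |x + y| ≤ 0 := by simpa [hu0] using h1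
      rw [hαdef, dif_pos hu0, zero_mul, abs_nonpos_iff.mp h0]
    · rw [hαdef, dif_neg hu0, div_mul_cancel₀ _ hu0]
  have hβv : β * v = x - y := by
    by_cases hv0 : v = 0
    · rw [hβdef, dif_pos hv0, zero_mul]
      have h0 : |x - y| ≤ 0 := by simpa [hv0] using h2
      rw [abs_nonpos_iff.mp h0]
    · rw [hβdef, dif_neg hv0, div_mul_cancel₀ _ hv0]
  have hα1 : |α| ≤ 1 := by
    by_cases hu0 : u = 0
    · simp [hαdef, hu0]
    · rw [hαdef, dif_neg hu0, abs_div, div_le_one (abs_pos.mpr hu0)]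
      exact h1
  have hβ1 : |β| ≤ 1 := by
    by_cases hv0 : v = 0
    · simp [hβdef, hv0]
    · rw [hβdef, dif_neg hv0, abs_div, div_le_one (abs_pos.mpr hv0)]
      exact h2
  obtain ⟨hαl, hαr⟩ := abs_le.mp hα1
  obtain ⟨hβl, hβr⟩ := abs_le.mp hβ1
  set p : ℚ := (1 + α) / 2 with hpdef
  set q : ℚ := (1 + β) / 2 with hqdef
  have hp0 : 0 ≤ p := by rw [hpdef]; linarith
  have hp1 : p ≤ 1 := by rw [hpdef]; linarith
  have hq0 : 0 ≤ q := by rw [hqdef]; linarith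
  have hq1 : q ≤ 1 := by rw [hqdef]; linarith
  have hconv := convex_convexHull ℚ (orbS l)
  have hin1 : q • z + (1 - q) • (fun i => z (Equiv.swap a b i)) ∈ convexHull ℚ (orbS l) :=
    hconv hz hP2 hq0 (by linarith) (by ring)
  have hin2 : q • (fun i => η i * z (Equiv.swap a b i)) + (1 - q) • (fun i => η i * z i)
      ∈ convexHull ℚ (orbS l) :=
    hconv hP4 hP3 hq0 (by linarith) (by ring)
  have hW : p • (q • z + (1 - q) • (fun i => z (Equiv.swap a b i)))
      + (1 - p) • (q • (fun i => η i * z (Equiv.swap a b i)) + (1 - q) • (fun i => η i * z i))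
      ∈ convexHull ℚ (orbS l) :=
    hconv hin1 hin2 hp0 (by linarith) (by ring)
  have heq : p • (q • z + (1 - q) • (fun i => z (Equiv.swap a b i)))
      + (1 - p) • (q • (fun i => η i * z (Equiv.swap a b i)) + (1 - q) • (fun i => η i * z i))
      = Function.update (Function.update z a x) b y := by
    funext i
    simp only [Pi.add_apply, Pi.smul_apply, smul_eq_mul]
    rcases eq_or_ne i b with rfl | hib
    · rw [Function.update_self]
      rw [Equiv.swap_apply_right]
      have hηb : η i = -1 := by simp [hηdef]
      rw [hηb, hpdef, hqdef]
      have hu' : u = z a + z i := hu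
      have hv' : v = z a - z i := hv
      rw [hu'] at hαu
      rw [hv'] at hβv
      linear_combination hαu / 2 - hβv / 2
    · rw [Function.update_of_ne hib]
      rcases eq_or_ne i a with rfl | hia
      · rw [Function.update_self, Equiv.swap_apply_left]
        have hηa : η i = -1 := by simp [hηdef]
        rw [hηa, hpdef, hqdef]
        rw [hu] at hαu
        rw [hv] at hβv
        linear_combination hαu / 2 + hβv / 2
      · rw [Function.update_of_ne hia, Equiv.swap_apply_of_ne_of_ne hia hib]
        have hηi : η i = 1 := by simp [hηdef, hia, hib]
        rw [hηi]; ring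
  rw [← heq]
  exact hW

lemma sum_pattern (hn : 2 ≤ n) (A B : ℤ) :
    (∑ i : Fin n, (if (i:ℕ) = 0 then A else if (i:ℕ) = n-1 then B else 1))
      = (n:ℤ) + (A - 1) + (B - 1) := by
  have h1 : ∀ i : Fin n, (if (i:ℕ) = 0 then A else if (i:ℕ) = n-1 then B else 1)
      = 1 + (if i = (⟨0, by omega⟩ : Fin n) then A - 1 else 0)
          + (if i = (⟨n-1, by omega⟩ : Fin n) then B - 1 else 0) := by
    intro i
    by_cases h0 : (i:ℕ) = 0
    · rw [if_pos h0, if_pos (Fin.ext h0), if_neg (Fin.ne_of_val_ne (show (i:ℕ) ≠ n-1 by omega))]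
      ring
    · by_cases hb : (i:ℕ) = n-1
      · rw [if_neg h0, if_pos hb, if_neg (Fin.ne_of_val_ne (show (i:ℕ) ≠ 0 by omega)),
          if_pos (Fin.ext hb)]
        ring
      · rw [if_neg h0, if_neg hb, if_neg (Fin.ne_of_val_ne (show (i:ℕ) ≠ 0 by omega)),
          if_neg (Fin.ne_of_val_ne (show (i:ℕ) ≠ n-1 by omega))]
        ring
  rw [Finset.sum_congr rfl (fun i _ => h1 i), Finset.sum_add_distrib, Finset.sum_add_distrib,
    Finset.sum_const, Finset.sum_ite_eq' Finset.univ (⟨0, by omega⟩ : Fin n) (fun _ => A - 1),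
    Finset.sum_ite_eq' Finset.univ (⟨n-1, by omega⟩ : Fin n) (fun _ => B - 1)]
  simp [Finset.card_univ]
  try ring

lemma phase2 (hn : 4 ≤ n) (l : Fin n → ℚ) (sQ : ℚ) (g : Fin n → ℚ)
    (hg : g ∈ convexHull ℚ (orbS l))
    (hgA : g ⟨n-2, (by omega : _ < n + 0)⟩ = 1/2) (hgB : g ⟨n-1, (by omega : _ < n + 0)⟩ = sQ/2)
    (hg0 : 3/2 ≤ g ⟨0, (by omega : _ < n + 0)⟩)
    (hgmid : ∀ j : Fin n, 1 ≤ (j:ℕ) → (j:ℕ) ≤ n-3 → 1/2 ≤ g j) :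
    (fun i : Fin n => if (i:ℕ) = 0 then (3:ℚ)/2 else if (i:ℕ) = n-1 then sQ/2 else 1/2)
      ∈ convexHull ℚ (orbS l) := by
  have hAlt : n - 2 < n := by omega
  have hBlt : n - 1 < n := by omega
  have h0lt : 0 < n := by omega
  set iA : Fin n := ⟨n-2, hAlt⟩ with hiA
  set i0 : Fin n := ⟨0, h0lt⟩ with hi0
  have hiAv : (iA:ℕ) = n - 2 := rfl
  have hi0v : (i0:ℕ) = 0 := rfl
  have hloop : ∀ m : ℕ, m ≤ n - 3 →
      (fun i : Fin n => if 1 ≤ (i:ℕ) ∧ (i:ℕ) ≤ m then (1:ℚ)/2 else g i)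
        ∈ convexHull ℚ (orbS l) := by
    intro m
    induction m with
    | zero =>
      intro _
      have : (fun i : Fin n => if 1 ≤ (i:ℕ) ∧ (i:ℕ) ≤ 0 then (1:ℚ)/2 else g i) = g := by
        funext i
        rw [if_neg (by omega)]
      rw [this]; exact hg
    | succ m ih =>
      intro hm
      have hz := ih (by omega)
      have haval : m + 1 < n := by omega
      set a : Fin n := ⟨m+1, haval⟩ with ha
      have hav : (a:ℕ) = m + 1 := rfl
      have hab : a ≠ iA := Fin.ne_of_val_ne (show m+1 ≠ n-2 by omega)
      set z : Fin n → ℚ := fun i : Fin n => if 1 ≤ (i:ℕ) ∧ (i:ℕ) ≤ m then (1:ℚ)/2 else g i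
        with hzdef
      have hza : z a = g a := by rw [hzdef]; simp only []; rw [if_neg (by omega)]
      have hzA : z iA = 1/2 := by
        rw [hzdef]; simp only []; rw [if_neg (by omega)]; rw [← hgA]
      have hga : 1/2 ≤ g a := hgmid a (by omega) (by omega)
      have h1 : |(1:ℚ)/2 + 1/2| ≤ |z a + z iA| := by
        rw [hza, hzA]
        rw [abs_of_nonneg (by linarith), abs_of_nonneg (by linarith)]
        linarith
      have h2 : |(1:ℚ)/2 - 1/2| ≤ |z a - z iA| := by
        simp
      have hmv := move l hz hab h1 h2
      have heq : Function.update (Function.update z a (1/2)) iA (1/2)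
          = (fun i : Fin n => if 1 ≤ (i:ℕ) ∧ (i:ℕ) ≤ m + 1 then (1:ℚ)/2 else g i) := by
        funext i
        rcases eq_or_ne i iA with rfl | hiAne
        · rw [Function.update_self, if_neg (by omega), ← hgA]
        · rw [Function.update_of_ne hiAne]
          rcases eq_or_ne i a with rfl | hane
          · rw [Function.update_self, if_pos (by omega)]
          · rw [Function.update_of_ne hane, hzdef]
            simp only []
            have hvne : (i:ℕ) ≠ m + 1 := fun h => hane (Fin.ext h)
            split_ifs with hc1 hc2 hc2
            · rfl
            · omega
            · omega
            · rfl
      rw [heq] at hmv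
      exact hmv
  have hz := hloop (n-3) le_rfl
  set z : Fin n → ℚ := fun i : Fin n => if 1 ≤ (i:ℕ) ∧ (i:ℕ) ≤ n-3 then (1:ℚ)/2 else g i
    with hzdef
  have hab : i0 ≠ iA := Fin.ne_of_val_ne (show 0 ≠ n-2 by omega)
  have hz0 : z i0 = g i0 := by rw [hzdef]; simp only []; rw [if_neg (by omega)]
  have hzA : z iA = 1/2 := by rw [hzdef]; simp only []; rw [if_neg (by omega), ← hgA]
  have hg0' : 3/2 ≤ z i0 := by rw [hz0]; exact hg0
  have h1 : |(3:ℚ)/2 + 1/2| ≤ |z i0 + z iA| := by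
    rw [hzA, abs_of_nonneg (by linarith), abs_of_nonneg (by linarith)]; linarith
  have h2 : |(3:ℚ)/2 - 1/2| ≤ |z i0 - z iA| := by
    rw [hzA, abs_of_nonneg (by linarith), abs_of_nonneg (by linarith)]; linarith
  have hmv := move l hz hab h1 h2
  have heq : Function.update (Function.update z i0 (3/2)) iA (1/2)
      = (fun i : Fin n => if (i:ℕ) = 0 then (3:ℚ)/2 else if (i:ℕ) = n-1 then sQ/2 else 1/2) := by
    funext i
    rcases eq_or_ne i iA with rfl | hiAne
    · rw [Function.update_self, if_neg (by omega), if_neg (by omega)]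
    · rw [Function.update_of_ne hiAne]
      rcases eq_or_ne i i0 with rfl | h0ne
      · rw [Function.update_self, if_pos rfl]
      · have hv0 : (i:ℕ) ≠ 0 := fun h => h0ne (Fin.ext h)
        have hvA : (i:ℕ) ≠ n-2 := fun h => hiAne (Fin.ext h)
        rw [Function.update_of_ne h0ne, hzdef]
        simp only []
        rcases eq_or_ne (i:ℕ) (n-1) with hB | hBne
        · rw [if_neg (by omega), if_neg hv0, if_pos hB]
          have : i = (⟨n-1, by omega⟩ : Fin n) := Fin.ext hB
          rw [this]; exact hgB
        · have : (i:ℕ) < n := i.isLt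
          rw [if_pos (by omega), if_neg hv0, if_neg hBne]
  rw [heq] at hmv
  exact hmv

lemma degen (hn : 4 ≤ n) (l : Fin n → ℚ) (k : Fin n → ℤ)
    (hodd : ∀ i, Odd (k i)) (hval : ∀ i, l i = (k i : ℚ)/2)
    (hmono : ∀ i j : Fin n, i ≤ j → (j : ℕ) < n - 1 → l j ≤ l i)
    (hl1 : 3/2 ≤ l ⟨0, (by omega : _ < n + 0)⟩)
    (hmid : ∀ j : Fin n, (j:ℕ) < n-1 → 1/2 ≤ l j)
    (hnoκ : ∀ κ : Fin n, ¬(((κ:ℕ) = 0 ∧ 5/2 ≤ l κ) ∨ (1 ≤ (κ:ℕ) ∧ (κ:ℕ) ≤ n-3 ∧ 3/2 ≤ l κ))) :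
    (∑ i, k i) = (n:ℤ) + 1 + k ⟨n-1, (by omega : _ < n + 0)⟩ ∧ l ⟨n-2, (by omega : _ < n + 0)⟩ = 1/2 := by
  have hbound : ∀ (i : Fin n) (A B : ℤ), ((A:ℚ))/2 ≤ l i → l i < ((B:ℚ))/2 →
      A ≤ k i ∧ k i < B := by
    intro i A B hA hB
    rw [hval i] at hA hB
    constructor
    · exact_mod_cast (by linarith : (A:ℚ) ≤ (k i : ℚ))
    · exact_mod_cast (by linarith : ((k i : ℚ)) < B)
  have h0lt : 0 < n := by omega
  have hAlt : n - 2 < n := by omega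
  have hBlt : n - 1 < n := by omega
  have hv0 : ((⟨0, h0lt⟩ : Fin n) : ℕ) = 0 := rfl
  have hvA : ((⟨n-2, hAlt⟩ : Fin n) : ℕ) = n - 2 := rfl
  have hvB : ((⟨n-1, hBlt⟩ : Fin n) : ℕ) = n - 1 := rfl
  have hk0 : k ⟨0, h0lt⟩ = 3 := by
    have h5 : l ⟨0, h0lt⟩ < 5/2 := by
      by_contra hcon
      push_neg at hcon
      exact hnoκ ⟨0, h0lt⟩ (Or.inl ⟨rfl, hcon⟩)
    have := hbound ⟨0, h0lt⟩ 3 5 (by push_cast; linarith [hl1]) (by push_cast; linarith)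
    obtain ⟨t, ht⟩ := hodd ⟨0, h0lt⟩
    omega
  have hm1 : ∀ j : Fin n, 1 ≤ (j:ℕ) → (j:ℕ) ≤ n-3 → k j = 1 := by
    intro j h1j h2j
    have hlt : l j < 3/2 := by
      by_contra hcon
      push_neg at hcon
      exact hnoκ j (Or.inr ⟨h1j, h2j, hcon⟩)
    have hge : 1/2 ≤ l j := hmid j (by omega)
    have := hbound j 1 3 (by push_cast; linarith) (by push_cast; linarith)
    obtain ⟨t, ht⟩ := hodd j
    omega
  have h1n : (1:ℕ) < n := by omega
  have hone : l ⟨1, h1n⟩ = 1/2 := by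
    have hv1 : ((⟨1, h1n⟩ : Fin n) : ℕ) = 1 := rfl
    rw [hval ⟨1, h1n⟩, hm1 ⟨1, h1n⟩ (by rw [hv1]) (by rw [hv1]; omega)]
    norm_num
  have hkA : k ⟨n-2, hAlt⟩ = 1 := by
    have hle : l ⟨n-2, hAlt⟩ ≤ l ⟨1, h1n⟩ :=
      hmono ⟨1, h1n⟩ ⟨n-2, hAlt⟩ (by rw [Fin.mk_le_mk]; omega) (by rw [hvA]; omega)
    have hge : 1/2 ≤ l ⟨n-2, hAlt⟩ := hmid ⟨n-2, hAlt⟩ (by rw [hvA]; omega)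
    have heq : l ⟨n-2, hAlt⟩ = 1/2 := le_antisymm (by rw [← hone]; exact hle)
      hge
    have : ((k ⟨n-2, hAlt⟩ : ℚ)) = 1 := by
      rw [hval ⟨n-2, hAlt⟩] at heq
      linarith
    exact_mod_cast this
  have hm2 : ∀ j : Fin n, 1 ≤ (j:ℕ) → (j:ℕ) ≤ n-2 → k j = 1 := by
    intro j h1j h2j
    rcases eq_or_ne (j:ℕ) (n-2) with h | h
    · rw [(Fin.ext h : j = ⟨n-2, hAlt⟩)]
      exact hkA
    · exact hm1 j h1j (by omega)
  have hkfun : ∀ i : Fin n, k i =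
      (if (i:ℕ) = 0 then 3 else if (i:ℕ) = n-1 then k ⟨n-1, hBlt⟩ else 1) := by
    intro i
    by_cases h0 : (i:ℕ) = 0
    · rw [if_pos h0, (Fin.ext h0 : i = ⟨0, h0lt⟩)]; exact hk0
    · by_cases hb : (i:ℕ) = n-1
      · rw [if_neg h0, if_pos hb, (Fin.ext hb : i = ⟨n-1, hBlt⟩)]
      · rw [if_neg h0, if_neg hb]
        have : (i:ℕ) < n := i.isLt
        exact hm2 i (by omega) (by omega)
  constructor
  · rw [Finset.sum_congr rfl (fun i _ => hkfun i), sum_pattern (by omega) 3 (k ⟨n-1, hBlt⟩)]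
    ring
  · have hle : l ⟨n-2, hAlt⟩ ≤ l ⟨1, h1n⟩ :=
      hmono ⟨1, h1n⟩ ⟨n-2, hAlt⟩ (by rw [Fin.mk_le_mk]; omega) (by rw [hvA]; omega)
    have hge : 1/2 ≤ l ⟨n-2, hAlt⟩ := hmid ⟨n-2, hAlt⟩ (by rw [hvA]; omega)
    exact le_antisymm (by rw [← hone]; exact hle) hge

end Stmt12Aux


open Stmt12Aux in
/-- Let `n ≥ 4` and let `λ = (ℓ1,…,ℓn) ∈ ℚ^n` be such that each `2ℓi` is an odd integer,
`ℓ1 ≥ ℓ2 ≥ … ≥ ℓ_{n−1} ≥ |ℓn|`, and `ℓ1 ≥ 3/2`. Then there exists a vector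
`μ = (3/2, 1/2, 1/2, ℓ'4, …, ℓ'n)` with each `2ℓ'i` an odd integer, such that `μ` lies in
the convex hull of the orbit of `λ` under the group generated by coordinate permutations
and sign changes of an even number of coordinates, and `μ − λ` is an integer vector with
even coordinate sum. -/
theorem stmt12 {n : ℕ} (hn : 4 ≤ n) (l : Fin n → ℚ)
    (hhalf : ∀ i, ∃ k : ℤ, Odd k ∧ l i = (k : ℚ) / 2)
    (hmono : ∀ i j : Fin n, i ≤ j → (j : ℕ) < n - 1 → l j ≤ l i)
    (hlast : |l ⟨n - 1, by omega⟩| ≤ l ⟨n - 2, by omega⟩)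
    (hl1 : 3 / 2 ≤ l ⟨0, by omega⟩) :
    ∃ μ : Fin n → ℚ,
      μ ⟨0, by omega⟩ = 3 / 2 ∧ μ ⟨1, by omega⟩ = 1 / 2 ∧ μ ⟨2, by omega⟩ = 1 / 2 ∧
      (∀ i, ∃ k : ℤ, Odd k ∧ μ i = (k : ℚ) / 2) ∧
      μ ∈ convexHull ℚ {x : Fin n → ℚ | ∃ σ : Equiv.Perm (Fin n), ∃ ε : Fin n → ℚ,
        (∀ i, ε i = 1 ∨ ε i = -1) ∧
        Even (Finset.univ.filter (fun i => ε i = -1)).card ∧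
        x = fun i => ε i * l (σ i)} ∧
      ∃ c : Fin n → ℤ, (∀ i, μ i - l i = (c i : ℚ)) ∧ Even (∑ i, c i) := by
  classical
  choose k hodd hval using hhalf
  have h0lt : 0 < n := by omega
  have hAlt : n - 2 < n := by omega
  have hBlt : n - 1 < n := by omega
  set iA : Fin n := ⟨n-2, hAlt⟩ with hiAdef
  set iB : Fin n := ⟨n-1, hBlt⟩ with hiBdef
  set i0 : Fin n := ⟨0, h0lt⟩ with hi0def
  have hvA : (iA:ℕ) = n - 2 := rfl
  have hvB : (iB:ℕ) = n - 1 := rfl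
  have hv0 : (i0:ℕ) = 0 := rfl
  have hlast' : |l iB| ≤ l iA := hlast
  have hl1' : 3/2 ≤ l i0 := hl1
  have hAB : iA ≠ iB := Fin.ne_of_val_ne (by omega)
  have h0A : i0 ≠ iA := Fin.ne_of_val_ne (by omega)
  have h0B : i0 ≠ iB := Fin.ne_of_val_ne (by omega)
  have habs : ∀ i, 1/2 ≤ |l i| := by
    intro i
    obtain ⟨t, ht⟩ := hodd i
    have h1k : (1:ℤ) ≤ |k i| := by
      rcases le_or_gt 0 (k i) with h | h
      · rw [abs_of_nonneg h]; omega
      · rw [abs_of_neg h]; omega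
    have h1kq : (1:ℚ) ≤ |(k i : ℚ)| := by
      rw [← Int.cast_abs]
      exact_mod_cast h1k
    rw [hval i, abs_div, abs_two]
    linarith
  have hd : 1/2 ≤ l iA := le_trans (habs iB) hlast'
  have hmid : ∀ j : Fin n, (j:ℕ) < n-1 → 1/2 ≤ l j := by
    intro j hj
    rcases eq_or_ne j iA with rfl | hne
    · exact hd
    · have hle : l iA ≤ l j := hmono j iA (by rw [Fin.le_def, hvA]; omega) (by rw [hvA]; omega)
      linarith
  set K : ℤ := ∑ i, k i with hKdef
  set s : ℤ := if (4:ℤ) ∣ ((n:ℤ) + 2 - K) then 1 else -1 with hsdef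
  have hs : (s = 1 ∧ (4:ℤ) ∣ ((n:ℤ) + 2 - K)) ∨ (s = -1 ∧ ¬ (4:ℤ) ∣ ((n:ℤ) + 2 - K)) := by
    by_cases h : (4:ℤ) ∣ ((n:ℤ) + 2 - K)
    · exact Or.inl ⟨by rw [hsdef, if_pos h], h⟩
    · exact Or.inr ⟨by rw [hsdef, if_neg h], h⟩
  have hsval : s = 1 ∨ s = -1 := hs.imp And.left And.left
  have hsodd : Odd s := by rcases hsval with h | h <;> rw [h] <;> decide
  have hphase1 : ∃ g : Fin n → ℚ, g ∈ convexHull ℚ (orbS l) ∧ g iA = 1/2 ∧ g iB = (s:ℚ)/2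
      ∧ 3/2 ≤ g i0 ∧ (∀ j : Fin n, 1 ≤ (j:ℕ) → (j:ℕ) ≤ n-3 → 1/2 ≤ g j) := by
    have hstart : l ∈ convexHull ℚ (orbS l) := subset_convexHull ℚ _ (mem_orbS_self l)
    rcases hsval with hs1 | hs1
    · -- s = 1
      by_cases hbad : l iB = - l iA
      · -- bad+ case
        have hκex : ∃ κ : Fin n,
            ((κ:ℕ) = 0 ∧ 5/2 ≤ l κ) ∨ (1 ≤ (κ:ℕ) ∧ (κ:ℕ) ≤ n-3 ∧ 3/2 ≤ l κ) := by
          by_contra hcon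
          have hdeg := degen hn l k hodd hval hmono hl1 hmid (fun κ h => hcon ⟨κ, h⟩)
          have hlA : l iA = 1/2 := hdeg.2
          have hkB : k iB = -1 := by
            have h1 : l iB = -(1/2 : ℚ) := by rw [hbad, hlA]
            have h2 : ((k iB : ℚ)) = -1 := by rw [hval iB] at h1; linarith
            exact_mod_cast h2
          have h1' : (∑ i, k i) = (n:ℤ) + 1 + k iB := hdeg.1
          have hKn : K = (n:ℤ) := by rw [hKdef, h1', hkB]; ring
          rcases hs with ⟨_, hdvd⟩ | ⟨hsm1, _⟩
          · rw [hKn] at hdvd; omega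
          · omega
        obtain ⟨κ, hκ⟩ := hκex
        have hκ3 : 3/2 ≤ l κ := by rcases hκ with ⟨_, h⟩ | ⟨_, _, h⟩ <;> linarith
        have hκB : κ ≠ iB := Fin.ne_of_val_ne
          (by rcases hκ with ⟨h, _⟩ | ⟨h1, h2, _⟩ <;> omega)
        have hκA : κ ≠ iA := Fin.ne_of_val_ne
          (by rcases hκ with ⟨h, _⟩ | ⟨h1, h2, _⟩ <;> omega)
        have h1 : |(1:ℚ)/2 + -(1/2)| ≤ |l iA + l iB| := by
          rw [show (1:ℚ)/2 + -(1/2) = 0 from by ring, abs_zero]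
          exact abs_nonneg _
        have h2 : |(1:ℚ)/2 - -(1/2)| ≤ |l iA - l iB| := by
          rw [hbad, show l iA - -l iA = 2 * l iA from by ring,
            abs_of_nonneg (by linarith : (0:ℚ) ≤ 2 * l iA),
            show |(1:ℚ)/2 - -(1/2)| = 1 from by norm_num]
          linarith
        have hz1 := move l hstart hAB h1 h2
        set z1 := Function.update (Function.update l iA (1/2)) iB (-(1/2)) with hz1def
        have hz1κ : z1 κ = l κ := by
          rw [hz1def, Function.update_of_ne hκB, Function.update_of_ne hκA]
        have hz1B : z1 iB = -(1/2) := by rw [hz1def, Function.update_self]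
        have hz1A : z1 iA = 1/2 := by
          rw [hz1def, Function.update_of_ne hAB, Function.update_self]
        have h1' : |(l κ - 1) + 1/2| ≤ |z1 κ + z1 iB| := by
          rw [hz1κ, hz1B, show (l κ - 1) + 1/2 = l κ + -(1/2) from by ring]
        have h2' : |(l κ - 1) - 1/2| ≤ |z1 κ - z1 iB| := by
          rw [hz1κ, hz1B, show l κ - -(1/2) = l κ + 1/2 from by ring,
            show (l κ - 1) - 1/2 = l κ - 3/2 from by ring,
            abs_of_nonneg (by linarith : (0:ℚ) ≤ l κ - 3/2),
            abs_of_nonneg (by linarith : (0:ℚ) ≤ l κ + 1/2)]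
          linarith
        have hg := move l hz1 hκB h1' h2'
        refine ⟨_, hg, ?_, ?_, ?_, ?_⟩
        · rw [Function.update_of_ne hAB, Function.update_of_ne (Ne.symm hκA), hz1A]
        · rw [Function.update_self, hs1]; norm_num
        · rw [Function.update_of_ne h0B]
          rcases eq_or_ne i0 κ with h | h
          · rw [h, Function.update_self]
            have h0 : (κ:ℕ) = 0 := by rw [← h]
            rcases hκ with ⟨_, h5⟩ | ⟨h1'', _, _⟩
            · linarith
            · omega
          · rw [Function.update_of_ne h, hz1def, Function.update_of_ne h0B,
              Function.update_of_ne h0A]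
            exact hl1'
        · intro j hj1 hj2
          have hjB : j ≠ iB := Fin.ne_of_val_ne (by omega)
          have hjA : j ≠ iA := Fin.ne_of_val_ne (by omega)
          rw [Function.update_of_ne hjB]
          rcases eq_or_ne j κ with rfl | hne
          · rw [Function.update_self]; linarith
          · rw [Function.update_of_ne hne, hz1def, Function.update_of_ne hjB,
              Function.update_of_ne hjA]
            exact hmid j (by omega)
      · -- good+ case
        have hsum0 : 0 ≤ l iA + l iB := by
          have := neg_abs_le (l iB)
          linarith
        have hne0 : l iA + l iB ≠ 0 := fun h => hbad (by linarith)
        have hposq : 0 < l iA + l iB := lt_of_le_of_ne hsum0 (Ne.symm hne0)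
        have hint : ((k iA : ℚ)) + k iB = 2*(l iA + l iB) := by
          rw [hval iA, hval iB]; ring
        have hposZ : 0 < k iA + k iB := by
          have : (0:ℚ) < (k iA : ℚ) + k iB := by rw [hint]; linarith
          exact_mod_cast this
        have h2Z : 2 ≤ k iA + k iB := by
          obtain ⟨t1, ht1⟩ := hodd iA
          obtain ⟨t2, ht2⟩ := hodd iB
          omega
        have h1sum : 1 ≤ l iA + l iB := by
          have : (2:ℚ) ≤ (k iA:ℚ) + k iB := by exact_mod_cast h2Z
          linarith
        have h1 : |(1:ℚ)/2 + 1/2| ≤ |l iA + l iB| := by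
          rw [abs_of_nonneg hsum0, show |(1:ℚ)/2 + 1/2| = 1 from by norm_num]
          linarith
        have h2 : |(1:ℚ)/2 - 1/2| ≤ |l iA - l iB| := by simp
        have hg := move l hstart hAB h1 h2
        refine ⟨_, hg, ?_, ?_, ?_, ?_⟩
        · rw [Function.update_of_ne hAB, Function.update_self]
        · rw [Function.update_self, hs1]; norm_num
        · rw [Function.update_of_ne h0B, Function.update_of_ne h0A]; exact hl1'
        · intro j hj1 hj2
          have hjB : j ≠ iB := Fin.ne_of_val_ne (by omega)
          have hjA : j ≠ iA := Fin.ne_of_val_ne (by omega)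
          rw [Function.update_of_ne hjB, Function.update_of_ne hjA]
          exact hmid j (by omega)
    · -- s = -1
      by_cases hbad : l iB = l iA
      · -- bad- case
        have hκex : ∃ κ : Fin n,
            ((κ:ℕ) = 0 ∧ 5/2 ≤ l κ) ∨ (1 ≤ (κ:ℕ) ∧ (κ:ℕ) ≤ n-3 ∧ 3/2 ≤ l κ) := by
          by_contra hcon
          have hdeg := degen hn l k hodd hval hmono hl1 hmid (fun κ h => hcon ⟨κ, h⟩)
          have hlA : l iA = 1/2 := hdeg.2
          have hkB : k iB = 1 := by
            have h1 : l iB = (1/2 : ℚ) := by rw [hbad, hlA]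
            have h2 : ((k iB : ℚ)) = 1 := by rw [hval iB] at h1; linarith
            exact_mod_cast h2
          have h1' : (∑ i, k i) = (n:ℤ) + 1 + k iB := hdeg.1
          have hKn : K = (n:ℤ) + 2 := by rw [hKdef, h1', hkB]; ring
          rcases hs with ⟨hsp, _⟩ | ⟨_, hdvd⟩
          · omega
          · rw [hKn] at hdvd
            exact hdvd ⟨0, by ring⟩
        obtain ⟨κ, hκ⟩ := hκex
        have hκ3 : 3/2 ≤ l κ := by rcases hκ with ⟨_, h⟩ | ⟨_, _, h⟩ <;> linarith
        have hκB : κ ≠ iB := Fin.ne_of_val_ne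
          (by rcases hκ with ⟨h, _⟩ | ⟨h1, h2, _⟩ <;> omega)
        have hκA : κ ≠ iA := Fin.ne_of_val_ne
          (by rcases hκ with ⟨h, _⟩ | ⟨h1, h2, _⟩ <;> omega)
        have h1 : |(1:ℚ)/2 + 1/2| ≤ |l iA + l iB| := by
          rw [hbad, show l iA + l iA = 2 * l iA from by ring,
            abs_of_nonneg (by linarith : (0:ℚ) ≤ 2 * l iA),
            show |(1:ℚ)/2 + 1/2| = 1 from by norm_num]
          linarith
        have h2 : |(1:ℚ)/2 - 1/2| ≤ |l iA - l iB| := by simp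
        have hz1 := move l hstart hAB h1 h2
        set z1 := Function.update (Function.update l iA (1/2)) iB (1/2) with hz1def
        have hz1κ : z1 κ = l κ := by
          rw [hz1def, Function.update_of_ne hκB, Function.update_of_ne hκA]
        have hz1B : z1 iB = 1/2 := by rw [hz1def, Function.update_self]
        have hz1A : z1 iA = 1/2 := by
          rw [hz1def, Function.update_of_ne hAB, Function.update_self]
        have h1' : |(l κ - 1) + -(1/2)| ≤ |z1 κ + z1 iB| := by
          rw [hz1κ, hz1B, show (l κ - 1) + -(1/2) = l κ - 3/2 from by ring,
            abs_of_nonneg (by linarith : (0:ℚ) ≤ l κ - 3/2)]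
          calc l κ - 3/2 ≤ l κ + 1/2 := by linarith
            _ ≤ |l κ + 1/2| := le_abs_self _
        have h2' : |(l κ - 1) - -(1/2)| ≤ |z1 κ - z1 iB| := by
          rw [hz1κ, hz1B, show (l κ - 1) - -(1/2) = l κ - 1/2 from by ring]
        have hg := move l hz1 hκB h1' h2'
        refine ⟨_, hg, ?_, ?_, ?_, ?_⟩
        · rw [Function.update_of_ne hAB, Function.update_of_ne (Ne.symm hκA), hz1A]
        · rw [Function.update_self, hs1]; norm_num
        · rw [Function.update_of_ne h0B]
          rcases eq_or_ne i0 κ with h | h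
          · rw [h, Function.update_self]
            have h0 : (κ:ℕ) = 0 := by rw [← h]
            rcases hκ with ⟨_, h5⟩ | ⟨h1'', _, _⟩
            · linarith
            · omega
          · rw [Function.update_of_ne h, hz1def, Function.update_of_ne h0B,
              Function.update_of_ne h0A]
            exact hl1'
        · intro j hj1 hj2
          have hjB : j ≠ iB := Fin.ne_of_val_ne (by omega)
          have hjA : j ≠ iA := Fin.ne_of_val_ne (by omega)
          rw [Function.update_of_ne hjB]
          rcases eq_or_ne j κ with rfl | hne
          · rw [Function.update_self]; linarith
          · rw [Function.update_of_ne hne, hz1def, Function.update_of_ne hjB,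
              Function.update_of_ne hjA]
            exact hmid j (by omega)
      · -- good- case
        have hsub0 : 0 ≤ l iA - l iB := by
          have := le_abs_self (l iB)
          linarith
        have hne0 : l iA - l iB ≠ 0 := fun h => hbad (by linarith)
        have hposq : 0 < l iA - l iB := lt_of_le_of_ne hsub0 (Ne.symm hne0)
        have hint : ((k iA : ℚ)) - k iB = 2*(l iA - l iB) := by
          rw [hval iA, hval iB]; ring
        have hposZ : 0 < k iA - k iB := by
          have : (0:ℚ) < (k iA : ℚ) - k iB := by rw [hint]; linarith
          exact_mod_cast this
        have h2Z : 2 ≤ k iA - k iB := by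
          obtain ⟨t1, ht1⟩ := hodd iA
          obtain ⟨t2, ht2⟩ := hodd iB
          omega
        have h1sub : 1 ≤ l iA - l iB := by
          have : (2:ℚ) ≤ (k iA:ℚ) - k iB := by exact_mod_cast h2Z
          linarith
        have h1 : |(1:ℚ)/2 + -(1/2)| ≤ |l iA + l iB| := by
          rw [show (1:ℚ)/2 + -(1/2) = 0 from by ring, abs_zero]
          exact abs_nonneg _
        have h2 : |(1:ℚ)/2 - -(1/2)| ≤ |l iA - l iB| := by
          rw [abs_of_nonneg hsub0, show |(1:ℚ)/2 - -(1/2)| = 1 from by norm_num]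
          linarith
        have hg := move l hstart hAB h1 h2
        refine ⟨_, hg, ?_, ?_, ?_, ?_⟩
        · rw [Function.update_of_ne hAB, Function.update_self]
        · rw [Function.update_self, hs1]; norm_num
        · rw [Function.update_of_ne h0B, Function.update_of_ne h0A]; exact hl1'
        · intro j hj1 hj2
          have hjB : j ≠ iB := Fin.ne_of_val_ne (by omega)
          have hjA : j ≠ iA := Fin.ne_of_val_ne (by omega)
          rw [Function.update_of_ne hjB, Function.update_of_ne hjA]
          exact hmid j (by omega)
  obtain ⟨g, hg, hgA, hgB, hg0, hgmid⟩ := hphase1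
  have hhull := phase2 hn l ((s:ℚ)) g hg hgA hgB hg0 hgmid
  have hevens : ∀ i : Fin n, ∃ t : ℤ,
      (if (i:ℕ) = 0 then (3:ℤ) else if (i:ℕ) = n-1 then s else 1) - k i = 2 * t := by
    intro i
    have hν : Odd (if (i:ℕ) = 0 then (3:ℤ) else if (i:ℕ) = n-1 then s else 1) := by
      split_ifs
      · exact ⟨1, by ring⟩
      · exact hsodd
      · exact odd_one
    obtain ⟨t1, ht1⟩ := hν
    obtain ⟨t2, ht2⟩ := hodd i
    exact ⟨t1 - t2, by omega⟩
  choose c hc using hevens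
  refine ⟨fun i : Fin n => if (i:ℕ) = 0 then (3:ℚ)/2 else if (i:ℕ) = n-1 then (s:ℚ)/2 else 1/2,
    ?_, ?_, ?_, ?_, ?_, c, ?_, ?_⟩
  · show (if ((0:ℕ) = 0) then (3:ℚ)/2 else if ((0:ℕ) = n-1) then (s:ℚ)/2 else 1/2) = 3/2
    rw [if_pos rfl]
  · show (if ((1:ℕ) = 0) then (3:ℚ)/2 else if ((1:ℕ) = n-1) then (s:ℚ)/2 else 1/2) = 1/2
    rw [if_neg (by omega), if_neg (by omega)]
  · show (if ((2:ℕ) = 0) then (3:ℚ)/2 else if ((2:ℕ) = n-1) then (s:ℚ)/2 else 1/2) = 1/2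
    rw [if_neg (by omega), if_neg (by omega)]
  · intro i
    by_cases h0 : (i:ℕ) = 0
    · refine ⟨3, ⟨1, by ring⟩, ?_⟩
      simp only []
      rw [if_pos h0]
      norm_num
    · by_cases hb : (i:ℕ) = n-1
      · refine ⟨s, hsodd, ?_⟩
        simp only []
        rw [if_neg h0, if_pos hb]
      · refine ⟨1, odd_one, ?_⟩
        simp only []
        rw [if_neg h0, if_neg hb]
        norm_num
  · exact hhull
  · intro i
    have hci := hc i
    have hcast : ((if (i:ℕ) = 0 then (3:ℤ) else if (i:ℕ) = n-1 then s else 1 : ℤ) : ℚ)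
        - (k i : ℚ) = 2 * (c i : ℚ) := by exact_mod_cast hci
    have hμeq : (if (i:ℕ) = 0 then (3:ℚ)/2 else if (i:ℕ) = n-1 then (s:ℚ)/2 else 1/2)
        = ((if (i:ℕ) = 0 then (3:ℤ) else if (i:ℕ) = n-1 then s else 1 : ℤ) : ℚ)/2 := by
      split_ifs <;> norm_num
    simp only []
    rw [hμeq, hval i]
    linarith
  · have hsum2 : 2 * (∑ i, c i) = ((n:ℤ) + (3 - 1) + (s - 1)) - K := by
      rw [Finset.mul_sum]
      calc (∑ i, 2 * c i)
          = ∑ i : Fin n, ((if (i:ℕ) = 0 then (3:ℤ) else if (i:ℕ) = n-1 then s else 1) - k i) :=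
            Finset.sum_congr rfl (fun i _ => (hc i).symm)
        _ = (∑ i : Fin n, (if (i:ℕ) = 0 then (3:ℤ) else if (i:ℕ) = n-1 then s else 1))
              - ∑ i, k i := Finset.sum_sub_distrib _ _
        _ = ((n:ℤ) + (3 - 1) + (s - 1)) - K := by
            rw [sum_pattern (by omega) 3 s, ← hKdef]
    have hKpar : (2:ℤ) ∣ K - n := by
      have he : (∑ i : Fin n, (k i - 1)) = K - n := by
        rw [Finset.sum_sub_distrib, ← hKdef, Finset.sum_const, Finset.card_univ,
          Fintype.card_fin]
        simp
      rw [← he]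
      exact Finset.dvd_sum (fun i _ => by obtain ⟨t, ht⟩ := hodd i; exact ⟨t, by omega⟩)
    rw [even_iff_two_dvd]
    rcases hs with ⟨hs1, hdvd⟩ | ⟨hs1, hdvd⟩ <;> rw [hs1] at hsum2 <;> omega
end

section
/- The set {(1,1,1,1), (1,1,−1,−1), (1,0,1,0), (0,−1,1,0)} ⊆ ℚ^4 is not saturated: the vector (1,1,0,0) belongs to the intersection of the ℤ-span and the ℚ≥0-span of these four vectors, but is not a ℤ≥0-linear combination of them. -/
section helper
abbrev w1 : Fin 4 → ℚ := ![1, 1, 1, 1]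
abbrev w2 : Fin 4 → ℚ := ![1, 1, -1, -1]
abbrev w3 : Fin 4 → ℚ := ![1, 0, 1, 0]
abbrev w4 : Fin 4 → ℚ := ![0, -1, 1, 0]

lemma h12 : w1 ≠ w2 := by intro h; have := congrFun h 2; simp [w1, w2] at this; norm_num at this
lemma h13 : w1 ≠ w3 := by intro h; have := congrFun h 1; norm_num at this
lemma h14 : w1 ≠ w4 := by intro h; have := congrFun h 0; norm_num at this
lemma h23 : w2 ≠ w3 := by intro h; have := congrFun h 1; norm_num at this
lemma h24 : w2 ≠ w4 := by intro h; have := congrFun h 0; norm_num at this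
lemma h34 : w3 ≠ w4 := by intro h; have := congrFun h 0; norm_num at this

lemma sum_expand {α : Type*} [AddCommMonoid α] (f : (Fin 4 → ℚ) → α) :
    ∑ w ∈ ({w1, w2, w3, w4} : Finset (Fin 4 → ℚ)), f w = f w1 + f w2 + f w3 + f w4 := by
  rw [show ({w1, w2, w3, w4} : Finset (Fin 4 → ℚ)) = insert w1 (insert w2 (insert w3 {w4})) from rfl]
  rw [Finset.sum_insert (by norm_num [h12, h13, h14]),
      Finset.sum_insert (by simp [h23, h24]),
      Finset.sum_insert (by simp [h34]), Finset.sum_singleton]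
  abel

end helper

/-- The set `{(1,1,1,1), (1,1,−1,−1), (1,0,1,0), (0,−1,1,0)} ⊆ ℚ^4` is not saturated:
the vector `(1,1,0,0)` belongs to the intersection of the `ℤ`-span and the `ℚ≥0`-span of
these four vectors, but is not a `ℤ≥0`-linear combination of them. -/
theorem stmt18 :
    memZSpan ({![1, 1, 1, 1], ![1, 1, -1, -1], ![1, 0, 1, 0], ![0, -1, 1, 0]} :
      Finset (Fin 4 → ℚ)) ![1, 1, 0, 0] ∧
    memQnnSpan ({![1, 1, 1, 1], ![1, 1, -1, -1], ![1, 0, 1, 0], ![0, -1, 1, 0]} :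
      Finset (Fin 4 → ℚ)) ![1, 1, 0, 0] ∧
    ¬ memNSpan ({![1, 1, 1, 1], ![1, 1, -1, -1], ![1, 0, 1, 0], ![0, -1, 1, 0]} :
      Finset (Fin 4 → ℚ)) ![1, 1, 0, 0] ∧
    ¬ Saturated ({![1, 1, 1, 1], ![1, 1, -1, -1], ![1, 0, 1, 0], ![0, -1, 1, 0]} :
      Finset (Fin 4 → ℚ)) := by
  have hN : ¬ memNSpan ({w1, w2, w3, w4} : Finset (Fin 4 → ℚ)) ![1, 1, 0, 0] := by
    rintro ⟨a, ha⟩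
    rw [sum_expand] at ha
    have e0 := congrFun ha 0
    have e1 := congrFun ha 1
    have e2 := congrFun ha 2
    have e3 := congrFun ha 3
    simp [w1, w2, w3, w4] at e0 e1 e2 e3
    have E0 : (1:ℚ) = a w1 + a w2 + a w3 := by linarith
    have E1 : (1:ℚ) + a w4 = a w1 + a w2 := by linarith
    have E2 : (a w1 : ℚ) + a w3 + a w4 = a w2 := by linarith
    have E3 : (a w1 : ℚ) = a w2 := by linarith
    have N0 : 1 = a w1 + a w2 + a w3 := by exact_mod_cast E0
    have N1 : 1 + a w4 = a w1 + a w2 := by exact_mod_cast E1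
    have N2 : a w1 + a w3 + a w4 = a w2 := by exact_mod_cast E2
    have N3 : a w1 = a w2 := by exact_mod_cast E3
    omega
  refine ⟨?_, ?_, hN, fun hS => hN (hS _ ?_ ?_)⟩
  · exact ⟨fun w => if w = w3 then 1 else if w = w4 then -1 else 0, by
      rw [sum_expand]
      simp [h13, h14, h23, h24, h34, h34.symm]⟩
  · exact ⟨fun w => if w = w1 then 1/2 else if w = w2 then 1/2 else 0, by
      intro w; dsimp only; split <;> [norm_num; (split <;> norm_num)], by
      rw [sum_expand]
      simp [h12, h13.symm, h14.symm, h23.symm, h24.symm]; norm_num⟩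
  · exact ⟨fun w => if w = w3 then 1 else if w = w4 then -1 else 0, by
      rw [sum_expand]
      simp [h13, h14, h23, h24, h34, h34.symm]⟩
  · exact ⟨fun w => if w = w1 then 1/2 else if w = w2 then 1/2 else 0, by
      intro w; dsimp only; split <;> [norm_num; (split <;> norm_num)], by
      rw [sum_expand]
      simp [h12, h13.symm, h14.symm, h23.symm, h24.symm]; norm_num⟩
end
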